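/- arXiv:2010.09972 — 2 statements merged into one kernel-verified Lean document; each statement's English description precedes it below -/
import Mathlib

section
/- Let s > 7/2 and suppose (ξ_k)_{k≥1} satisfies Σ_{k≥1} ‖ξ_k‖_{H^σ} < ∞ for every σ ≥ 0. Define, for X = (u,η) ∈ H^s(𝕋) × H^{s-1}(𝕋), g(X) = (−u ∂_x u + ½ (1−∂²_x)^{-1} Σ_{k=1}^∞ 𝓛²_{ξ_k} (1−∂²_x) u, −u ∂_x η + ½ Σ_{k=1}^∞ 𝓛²_{ξ_k} η) and h^k(X) = (−(1−∂²_x)^{-1} 𝓛_{ξ_k} (1−∂²_x) u, −𝓛_{ξ_k} η). Then there is a constant C > 0 (depending on s and (ξ_k)) such that ‖g(X)‖_{H^{s-2}×H^{s-3}} ≤ C (1 + ‖(u,η)‖²_{H^s×H^{s-1}}) and (Σ_{k=1}^∞ ‖h^k(X)‖²_{H^{s-1}×H^{s-2}})^{1/2} ≤ C ‖(u,η)‖_{H^s×H^{s-1}}. -/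
noncomputable section
open scoped BigOperators

/-- A (complex-valued) function on the torus `𝕋 = ℝ/2πℤ`, represented by its sequence of
Fourier coefficients `f̂ : ℤ → ℂ`. -/
abbrev FC := ℤ → ℂ

namespace FC

/-- The Sobolev weight `(1+k²)^s`. -/
def wt (s : ℝ) (k : ℤ) : ℝ := (1 + (k : ℝ) ^ 2) ^ s

/-- `c` represents a function belonging to the Sobolev space `H^s(𝕋)`. -/
def memHs (s : ℝ) (c : FC) : Prop := Summable fun k : ℤ => wt s k * ‖c k‖ ^ 2

/-- The `H^s(𝕋)` norm: `‖f‖²_{H^s} = Σ_{k∈ℤ} (1+k²)^s |f̂(k)|²`. -/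
def hsNorm (s : ℝ) (c : FC) : ℝ := Real.sqrt (∑' k : ℤ, wt s k * ‖c k‖ ^ 2)

/-- The `H^s(𝕋)` inner product `(f,g)_{H^s} = Σ_{k∈ℤ} (1+k²)^s f̂(k) conj(ĝ(k))`
(its real part; the sum is real for real-valued functions). -/
def hsInner (s : ℝ) (c d : FC) : ℝ :=
  (∑' k : ℤ, ((wt s k : ℂ) * (c k * (starRingEnd ℂ) (d k)))).re

/-- `c` represents a real-valued function (conjugate-symmetric coefficients). -/
def isReal (c : FC) : Prop := ∀ k : ℤ, c (-k) = (starRingEnd ℂ) (c k)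

/-- The derivative `∂ₓ`, i.e. the Fourier multiplier `ik`. -/
def D1 (c : FC) : FC := fun k => Complex.I * (k : ℂ) * c k

/-- The pointwise product of functions, i.e. convolution of Fourier coefficients. -/
def mul (c d : FC) : FC := fun k => ∑' j : ℤ, c j * d (k - j)

/-- The represented function, evaluated at `x ∈ ℝ`. -/
def eval (c : FC) (x : ℝ) : ℂ := ∑' k : ℤ, c k * Complex.exp (Complex.I * (k : ℂ) * (x : ℂ))

/-- The `L^∞` norm (supremum of the represented periodic function over ℝ). -/
def linfty (c : FC) : ℝ := ⨆ x : ℝ, ‖eval c x‖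

/-- The `W^{1,∞}` norm. -/
def w1infty (c : FC) : ℝ := linfty c + linfty (D1 c)

/-- A Fourier multiplier operator with real symbol `m`. -/
def mult (m : ℤ → ℝ) (c : FC) : FC := fun k => (m k : ℂ) * c k

/-- The operator `(1-∂ₓ²)⁻¹`, i.e. the Fourier multiplier `(1+k²)⁻¹`. -/
def helmInv : FC → FC := mult fun k => (1 + (k : ℝ) ^ 2)⁻¹

/-- The operator `1-∂ₓ²`, i.e. the Fourier multiplier `1+k²`. -/
def helm : FC → FC := mult fun k => 1 + (k : ℝ) ^ 2

/-- The operator `T̃_ε = (1-ε²∂ₓ²)⁻¹`, i.e. the Fourier multiplier `(1+ε²k²)⁻¹`. -/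
def T (ε : ℝ) : FC → FC := mult fun k => (1 + ε ^ 2 * (k : ℝ) ^ 2)⁻¹

/-- The periodic Hilbert transform, i.e. the Fourier multiplier `-i·sgn(k)`. -/
def hilbert (c : FC) : FC := fun k => -Complex.I * (Int.sign k : ℂ) * c k

/-- The Friedrichs-type mollifier `J_ε`, the Fourier multiplier `ĵ(εk)`. -/
def Jmol (jhat : ℝ → ℝ) (ε : ℝ) : FC → FC := mult fun k => jhat (ε * (k : ℝ))

/-- The generalized Lie derivative `𝓛_ξ f = ξ ∂ₓ f + (∂ₓ ξ) f`. -/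
def lie (ξ c : FC) : FC := mul ξ (D1 c) + mul (D1 ξ) c

/-- `𝓛²_ξ f = 𝓛_ξ (𝓛_ξ f)`. -/
def lie2 (ξ c : FC) : FC := lie ξ (lie ξ c)

/-- The coefficientwise sum `Σ_{k∈ℕ} F k` of a sequence of functions. -/
def tsumFC (F : ℕ → FC) : FC := fun m => ∑' k : ℕ, F k m

/-- The norm on the product space `H^{s₁}×H^{s₂}`. -/
def pairNorm (s₁ s₂ : ℝ) (c d : FC) : ℝ := Real.sqrt (hsNorm s₁ c ^ 2 + hsNorm s₂ d ^ 2)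

/-- The inner product on the product space `H^{s₁}×H^{s₂}`:
`((c₁,d₁),(c₂,d₂)) ↦ (c₁,c₂)_{H^{s₁}} + (d₁,d₂)_{H^{s₂}}`. -/
def pairInner (s₁ s₂ : ℝ) (c₁ d₁ c₂ d₂ : FC) : ℝ := hsInner s₁ c₁ c₂ + hsInner s₂ d₁ d₂

end FC

/-- First component of the singular drift of the stochastic two-component CH system:
`−u ∂ₓ u + ½ (1−∂ₓ²)⁻¹ Σ_k 𝓛²_{ξ_k} (1−∂ₓ²) u`. -/
def gCH1 (ξ : ℕ → FC) (u : FC) : FC :=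
  -(FC.mul u (FC.D1 u)) +
    (1 / 2 : ℝ) • FC.helmInv (FC.tsumFC fun k => FC.lie2 (ξ k) (FC.helm u))

/-- Second component of the singular drift of the stochastic two-component CH system:
`−u ∂ₓ η + ½ Σ_k 𝓛²_{ξ_k} η`. -/
def gCH2 (ξ : ℕ → FC) (u η : FC) : FC :=
  -(FC.mul u (FC.D1 η)) + (1 / 2 : ℝ) • FC.tsumFC fun k => FC.lie2 (ξ k) η

/-- First component of the diffusion coefficient `h^k`:
`−(1−∂ₓ²)⁻¹ 𝓛_{ξ_k} (1−∂ₓ²) u`. -/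
def hCH1 (ξ : ℕ → FC) (k : ℕ) (u : FC) : FC :=
  -(FC.helmInv (FC.lie (ξ k) (FC.helm u)))

/-- Second component of the diffusion coefficient `h^k`: `−𝓛_{ξ_k} η`. -/
def hCH2 (ξ : ℕ → FC) (k : ℕ) (η : FC) : FC := -(FC.lie (ξ k) η)

namespace SP
open FC

lemma one_le_base (k : ℤ) : (1:ℝ) ≤ 1 + (k:ℝ)^2 := le_add_of_nonneg_right (sq_nonneg _)
lemma base_pos (k : ℤ) : (0:ℝ) < 1 + (k:ℝ)^2 := lt_of_lt_of_le one_pos (one_le_base k)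
lemma wt_pos (s : ℝ) (k : ℤ) : 0 < wt s k := Real.rpow_pos_of_pos (base_pos k) s
lemma wt_nonneg (s : ℝ) (k : ℤ) : 0 ≤ wt s k := (wt_pos s k).le
lemma wt_mono {s t : ℝ} (h : s ≤ t) (k : ℤ) : wt s k ≤ wt t k :=
  Real.rpow_le_rpow_of_exponent_le (one_le_base k) h
lemma wt_add (s t : ℝ) (k : ℤ) : wt (s+t) k = wt s k * wt t k := Real.rpow_add (base_pos k) s t
lemma wt_zero (k : ℤ) : wt 0 k = 1 := Real.rpow_zero _
lemma wt_neg (s : ℝ) (k : ℤ) : wt (-s) k = (wt s k)⁻¹ := Real.rpow_neg (base_pos k).le s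
lemma wt_sq (s : ℝ) (k : ℤ) : wt s k ^ 2 = wt (2*s) k := by
  rw [wt, wt, ← Real.rpow_natCast ((1 + (k:ℝ)^2) ^ s) 2, ← Real.rpow_mul (base_pos k).le]
  norm_num [mul_comm]
lemma sqrt_wt (s : ℝ) (k : ℤ) : Real.sqrt (wt s k) = wt (s/2) k := by
  have : wt s k = wt (s/2) k ^ 2 := by rw [wt_sq, show 2*(s/2) = s by ring]
  rw [this, Real.sqrt_sq (wt_nonneg _ k)]
lemma one_le_wt {s : ℝ} (hs : 0 ≤ s) (k : ℤ) : 1 ≤ wt s k := by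
  rw [← wt_zero k]; exact wt_mono hs k
lemma wt_even (s : ℝ) (k : ℤ) : wt s (-k) = wt s k := by simp [wt]

lemma peetre {r : ℝ} (hr : 0 ≤ r) (k j : ℤ) :
    wt r k ≤ 2 ^ r * (wt r j * wt r (k - j)) := by
  have hb : (1:ℝ) + (k:ℝ)^2 ≤ 2 * ((1 + (j:ℝ)^2) * (1 + ((k-j:ℤ):ℝ)^2)) := by
    push_cast
    nlinarith [sq_nonneg ((j:ℝ) - ((k:ℝ) - j)), sq_nonneg ((j:ℝ) * ((k:ℝ)-j))]
  calc wt r k ≤ (2 * ((1 + (j:ℝ)^2) * (1 + ((k-j:ℤ):ℝ)^2))) ^ r :=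
        Real.rpow_le_rpow (base_pos k).le hb hr
    _ = 2 ^ r * (wt r j * wt r (k - j)) := by
        rw [Real.mul_rpow (by norm_num) (by positivity), Real.mul_rpow (base_pos j).le (base_pos _).le]
        rfl

lemma peetre' (r : ℝ) (k j : ℤ) :
    wt r k ≤ 2 ^ |r| * (wt |r| j * wt r (k - j)) := by
  rcases le_or_gt 0 r with h | h
  · rw [abs_of_nonneg h]; exact peetre h k j
  · rw [abs_of_neg h]
    have h0 : 0 ≤ -r := by linarith
    have key := peetre h0 (k - j) (-j)
    rw [wt_even] at key
    have e1 : k - j - -j = k := by ring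
    rw [e1] at key
    have hA := wt_pos (-r) k
    have hB := wt_pos (-r) (k - j)
    have hgoal : wt r k = (wt (-r) k)⁻¹ := by rw [← wt_neg, neg_neg]
    have hgoal2 : wt r (k - j) = (wt (-r) (k - j))⁻¹ := by rw [← wt_neg, neg_neg]
    rw [hgoal, hgoal2, inv_eq_one_div]
    have e2 : (2:ℝ) ^ (-r) * (wt (-r) j * (wt (-r) (k - j))⁻¹)
        = (2 ^ (-r) * wt (-r) j) / wt (-r) (k - j) := by ring
    rw [e2, div_le_div_iff₀ hA hB]
    nlinarith [key]

/-- Cauchy–Schwarz for tsums of nonnegative reals. -/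
lemma tsum_cs {f g : ℤ → ℝ} (hf0 : ∀ k, 0 ≤ f k) (hg0 : ∀ k, 0 ≤ g k)
    (hf : Summable (fun k => f k ^ 2)) (hg : Summable fun k => g k ^ 2) :
    Summable (fun k => f k * g k) ∧
      (∑' k, f k * g k) ≤ Real.sqrt (∑' k, f k ^ 2) * Real.sqrt (∑' k, g k ^ 2) := by
  have hsum : Summable (fun k => f k * g k) := by
    refine Summable.of_nonneg_of_le (fun k => mul_nonneg (hf0 k) (hg0 k))
      (fun k => ?_) ((hf.add hg).mul_left (1/2))
    have := sq_nonneg (f k - g k)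
    simp only [one_div]
    nlinarith
  refine ⟨hsum, Summable.tsum_le_of_sum_le hsum (fun u => ?_)⟩
  have h1 : (∑ i ∈ u, f i * g i) ^ 2 ≤ (∑ i ∈ u, f i ^ 2) * ∑ i ∈ u, g i ^ 2 :=
    Finset.sum_mul_sq_le_sq_mul_sq u f g
  have h2 : (∑ i ∈ u, f i ^ 2) ≤ ∑' k, f k ^ 2 := Summable.sum_le_tsum u (fun i _ => sq_nonneg _) hf
  have h3 : (∑ i ∈ u, g i ^ 2) ≤ ∑' k, g k ^ 2 := Summable.sum_le_tsum u (fun i _ => sq_nonneg _) hg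
  have h4 : 0 ≤ ∑ i ∈ u, f i * g i := Finset.sum_nonneg (fun i _ => mul_nonneg (hf0 i) (hg0 i))
  calc (∑ i ∈ u, f i * g i) = Real.sqrt ((∑ i ∈ u, f i * g i) ^ 2) := (Real.sqrt_sq h4).symm
    _ ≤ Real.sqrt ((∑' k, f k ^ 2) * ∑' k, g k ^ 2) := by
        apply Real.sqrt_le_sqrt
        calc (∑ i ∈ u, f i * g i) ^ 2 ≤ (∑ i ∈ u, f i ^ 2) * ∑ i ∈ u, g i ^ 2 := h1
          _ ≤ (∑' k, f k ^ 2) * ∑' k, g k ^ 2 :=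
              mul_le_mul h2 h3 (Finset.sum_nonneg fun i _ => sq_nonneg _)
                (tsum_nonneg fun k => sq_nonneg _)
    _ = Real.sqrt (∑' k, f k ^ 2) * Real.sqrt (∑' k, g k ^ 2) :=
        Real.sqrt_mul (tsum_nonneg fun k => sq_nonneg _) _

lemma bdd_of_sq_summable {B : ℤ → ℝ} (hB0 : ∀ m, 0 ≤ B m) (hB : Summable fun m => B m ^ 2)
    (m : ℤ) : B m ≤ Real.sqrt (∑' n, B n ^ 2) := by
  have h1 : B m ^ 2 ≤ ∑' n, B n ^ 2 := Summable.le_tsum hB m (fun n _ => sq_nonneg _)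
  calc B m = Real.sqrt (B m ^ 2) := (Real.sqrt_sq (hB0 m)).symm
    _ ≤ _ := Real.sqrt_le_sqrt h1

lemma summable_shift (B : ℤ → ℝ) (hB : Summable fun m => B m ^ 2) (j : ℤ) :
    Summable (fun k => B (k - j) ^ 2) := by
  have := ((Equiv.subRight j).summable_iff (f := fun m => B m ^ 2)).mpr hB
  simpa [Function.comp_def, Equiv.subRight] using this

lemma tsum_shift (B : ℤ → ℝ) (j : ℤ) : (∑' k, B (k - j) ^ 2) = ∑' m, B m ^ 2 :=
  (Equiv.subRight j).tsum_eq (fun m => B m ^ 2)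

/-- Young's inequality `‖a ⋆ b‖₂ ≤ ‖a‖₁ ‖b‖₂` (squared form). -/
lemma young {A B : ℤ → ℝ} (hA0 : ∀ j, 0 ≤ A j) (hB0 : ∀ m, 0 ≤ B m)
    (hA : Summable A) (hB : Summable fun m => B m ^ 2) :
    Summable (fun k => (∑' j, A j * B (k - j)) ^ 2) ∧
      (∑' k, (∑' j, A j * B (k - j)) ^ 2) ≤ (∑' j, A j) ^ 2 * ∑' m, B m ^ 2 := by
  set SA := ∑' j, A j with hSA
  set SB := ∑' m, B m ^ 2 with hSB
  have hSA0 : 0 ≤ SA := tsum_nonneg hA0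
  have hSB0 : 0 ≤ SB := tsum_nonneg fun m => sq_nonneg _
  have hg2 : ∀ k, Summable (fun j => A j * B (k - j) ^ 2) := by
    intro k
    refine Summable.of_nonneg_of_le (fun j => mul_nonneg (hA0 j) (sq_nonneg _))
      (fun j => ?_) (hA.mul_right SB)
    exact mul_le_mul_of_nonneg_left (Summable.le_tsum hB (k - j) (fun n _ => sq_nonneg _)) (hA0 j)
  have inner_cs : ∀ k, (∑' j, A j * B (k - j)) ^ 2 ≤ SA * ∑' j, A j * B (k - j) ^ 2 := by
    intro k
    have e2 : ∀ j, (Real.sqrt (A j) * B (k - j)) ^ 2 = A j * B (k - j) ^ 2 := fun j => by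
      rw [mul_pow, Real.sq_sqrt (hA0 j)]
    obtain ⟨hs, hle⟩ := tsum_cs (f := fun j => Real.sqrt (A j))
      (g := fun j => Real.sqrt (A j) * B (k - j))
      (fun j => Real.sqrt_nonneg _) (fun j => mul_nonneg (Real.sqrt_nonneg _) (hB0 _))
      (hA.congr (fun j => (Real.sq_sqrt (hA0 j)).symm))
      ((hg2 k).congr (fun j => (e2 j).symm))
    have e1 : ∀ j, Real.sqrt (A j) * (Real.sqrt (A j) * B (k - j)) = A j * B (k - j) := fun j => by
      rw [← mul_assoc, Real.mul_self_sqrt (hA0 j)]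
    rw [tsum_congr e1, tsum_congr (fun j => Real.sq_sqrt (hA0 j)), tsum_congr e2] at hle
    have h0 : 0 ≤ ∑' j, A j * B (k - j) :=
      tsum_nonneg fun j => mul_nonneg (hA0 j) (hB0 _)
    have hX0 : 0 ≤ ∑' j, A j * B (k - j) ^ 2 :=
      tsum_nonneg fun j => mul_nonneg (hA0 j) (sq_nonneg _)
    calc (∑' j, A j * B (k - j)) ^ 2
        ≤ (Real.sqrt SA * Real.sqrt (∑' j, A j * B (k - j) ^ 2)) ^ 2 := by
          apply pow_le_pow_left₀ h0 hle
      _ = SA * ∑' j, A j * B (k - j) ^ 2 := by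
          rw [mul_pow, Real.sq_sqrt hSA0, Real.sq_sqrt hX0]
  have key : ∀ u : Finset ℤ, (∑ k ∈ u, (∑' j, A j * B (k - j)) ^ 2) ≤ SA ^ 2 * SB := by
    intro u
    have hsum_j : Summable (fun j => ∑ k ∈ u, A j * B (k - j) ^ 2) := by
      refine Summable.of_nonneg_of_le
        (fun j => Finset.sum_nonneg fun k _ => mul_nonneg (hA0 j) (sq_nonneg _))
        (fun j => ?_) (hA.mul_right SB)
      rw [← Finset.mul_sum]
      refine mul_le_mul_of_nonneg_left ?_ (hA0 j)
      calc (∑ k ∈ u, B (k - j) ^ 2) ≤ ∑' k, B (k - j) ^ 2 :=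
            Summable.sum_le_tsum u (fun _ _ => sq_nonneg _) (summable_shift B hB j)
        _ = SB := tsum_shift B j
    calc (∑ k ∈ u, (∑' j, A j * B (k - j)) ^ 2)
        ≤ ∑ k ∈ u, SA * ∑' j, A j * B (k - j) ^ 2 :=
          Finset.sum_le_sum (fun k _ => inner_cs k)
      _ = SA * ∑ k ∈ u, ∑' j, A j * B (k - j) ^ 2 := by rw [Finset.mul_sum]
      _ = SA * ∑' j, ∑ k ∈ u, A j * B (k - j) ^ 2 := by
          rw [Summable.tsum_finsetSum (fun k _ => hg2 k)]
      _ ≤ SA * ∑' j, A j * SB := by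
          refine mul_le_mul_of_nonneg_left ?_ hSA0
          refine Summable.tsum_le_tsum (fun j => ?_) hsum_j (hA.mul_right SB)
          rw [← Finset.mul_sum]
          refine mul_le_mul_of_nonneg_left ?_ (hA0 j)
          calc (∑ k ∈ u, B (k - j) ^ 2) ≤ ∑' k, B (k - j) ^ 2 :=
                Summable.sum_le_tsum u (fun _ _ => sq_nonneg _) (summable_shift B hB j)
            _ = SB := tsum_shift B j
      _ = SA ^ 2 * SB := by rw [tsum_mul_right, ← hSA]; ring
  have hsum : Summable (fun k => (∑' j, A j * B (k - j)) ^ 2) :=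
    summable_of_sum_le (fun k => sq_nonneg _) key
  exact ⟨hsum, Summable.tsum_le_of_sum_le hsum key⟩

/-- Minkowski inequality for an infinite sum of ℓ² functions. -/
lemma minkowski_tsum {G : ℕ → ℤ → ℝ} {ε : ℕ → ℝ}
    (hG0 : ∀ k m, 0 ≤ G k m) (hε0 : ∀ k, 0 ≤ ε k)
    (hsq : ∀ k, Summable (fun m => G k m ^ 2))
    (hbd : ∀ k, Real.sqrt (∑' m, G k m ^ 2) ≤ ε k)
    (hεs : Summable ε) (hptw : ∀ m, Summable fun k => G k m) :
    Summable (fun m => (∑' k, G k m) ^ 2) ∧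
      Real.sqrt (∑' m, (∑' k, G k m) ^ 2) ≤ ∑' k, ε k := by
  set T : ℤ → ℝ := fun m => ∑' k, G k m with hT
  set Sε := ∑' k, ε k with hSε
  have hSε0 : 0 ≤ Sε := tsum_nonneg hε0
  have hT0 : ∀ m, 0 ≤ T m := fun m => tsum_nonneg (fun k => hG0 k m)
  have key : ∀ u : Finset ℤ, (∑ m ∈ u, T m ^ 2) ≤ Sε ^ 2 := by
    intro u
    set Q := ∑ m ∈ u, T m ^ 2 with hQ
    have hQ0 : 0 ≤ Q := Finset.sum_nonneg fun m _ => sq_nonneg _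
    have step1 : Q = ∑' k : ℕ, ∑ m ∈ u, T m * G k m := by
      have e1 : Q = ∑ m ∈ u, ∑' k : ℕ, T m * G k m := by
        apply Finset.sum_congr rfl
        intro m _
        rw [pow_two, ← tsum_mul_left]
      rw [e1]
      exact (Summable.tsum_finsetSum (fun m _ => (hptw m).mul_left (T m))).symm
    have termbd : ∀ k, (∑ m ∈ u, T m * G k m) ≤ Real.sqrt Q * ε k := by
      intro k
      have h1 : (∑ m ∈ u, T m * G k m) ^ 2 ≤ (∑ m ∈ u, T m ^ 2) * ∑ m ∈ u, G k m ^ 2 :=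
        Finset.sum_mul_sq_le_sq_mul_sq u T (G k)
      have h2 : (∑ m ∈ u, G k m ^ 2) ≤ ∑' m, G k m ^ 2 :=
        Summable.sum_le_tsum u (fun m _ => sq_nonneg _) (hsq k)
      have h3 : 0 ≤ ∑ m ∈ u, T m * G k m :=
        Finset.sum_nonneg fun m _ => mul_nonneg (hT0 m) (hG0 k m)
      calc (∑ m ∈ u, T m * G k m) = Real.sqrt ((∑ m ∈ u, T m * G k m) ^ 2) :=
            (Real.sqrt_sq h3).symm
        _ ≤ Real.sqrt (Q * ∑' m, G k m ^ 2) := by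
            apply Real.sqrt_le_sqrt
            exact h1.trans (mul_le_mul_of_nonneg_left h2 hQ0)
        _ = Real.sqrt Q * Real.sqrt (∑' m, G k m ^ 2) := Real.sqrt_mul hQ0 _
        _ ≤ Real.sqrt Q * ε k :=
            mul_le_mul_of_nonneg_left (hbd k) (Real.sqrt_nonneg _)
    have hksum : Summable (fun k : ℕ => ∑ m ∈ u, T m * G k m) :=
      Summable.of_nonneg_of_le
        (fun k => Finset.sum_nonneg fun m _ => mul_nonneg (hT0 m) (hG0 k m))
        termbd (hεs.mul_left (Real.sqrt Q))
    have step2 : Q ≤ Real.sqrt Q * Sε := by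
      calc Q = ∑' k : ℕ, ∑ m ∈ u, T m * G k m := step1
        _ ≤ ∑' k : ℕ, Real.sqrt Q * ε k :=
            Summable.tsum_le_tsum termbd hksum (hεs.mul_left _)
        _ = Real.sqrt Q * Sε := by rw [tsum_mul_left]
    have hs : Real.sqrt Q ≤ Sε := by
      nlinarith [Real.sq_sqrt hQ0, Real.sqrt_nonneg Q]
    calc Q = Real.sqrt Q ^ 2 := (Real.sq_sqrt hQ0).symm
      _ ≤ Sε ^ 2 := pow_le_pow_left₀ (Real.sqrt_nonneg _) hs 2
  have hsum : Summable (fun m => T m ^ 2) := summable_of_sum_le (fun m => sq_nonneg _) key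
  refine ⟨hsum, ?_⟩
  calc Real.sqrt (∑' m, T m ^ 2) ≤ Real.sqrt (Sε ^ 2) :=
        Real.sqrt_le_sqrt (Summable.tsum_le_of_sum_le hsum key)
    _ = Sε := Real.sqrt_sq hSε0

/-! ### Sobolev norm basics -/

lemma summand_eq (t : ℝ) (c : FC) (k : ℤ) :
    wt t k * ‖c k‖ ^ 2 = (wt (t/2) k * ‖c k‖) ^ 2 := by
  rw [mul_pow, wt_sq, show 2*(t/2) = t by ring]

lemma memHs_iff (t : ℝ) (c : FC) :
    memHs t c ↔ Summable (fun k => (wt (t/2) k * ‖c k‖) ^ 2) := by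
  unfold memHs
  exact summable_congr (fun k => summand_eq t c k)

lemma hsNorm_eq (t : ℝ) (c : FC) :
    hsNorm t c = Real.sqrt (∑' k, (wt (t/2) k * ‖c k‖) ^ 2) := by
  unfold hsNorm
  rw [tsum_congr (fun k => summand_eq t c k)]

lemma hsNorm_nonneg (t : ℝ) (c : FC) : 0 ≤ hsNorm t c := Real.sqrt_nonneg _

lemma hsNorm_sq (t : ℝ) (c : FC) : hsNorm t c ^ 2 = ∑' k, wt t k * ‖c k‖ ^ 2 :=
  Real.sq_sqrt (tsum_nonneg fun k => mul_nonneg (wt_nonneg t k) (sq_nonneg _))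

lemma coeff_le {t : ℝ} {c : FC} (h : memHs t c) (k : ℤ) :
    wt (t/2) k * ‖c k‖ ≤ hsNorm t c := by
  rw [hsNorm_eq]
  exact bdd_of_sq_summable (fun m => mul_nonneg (wt_nonneg _ m) (norm_nonneg _))
    ((memHs_iff t c).mp h) k

lemma memHs_mono {t t' : ℝ} (h : t ≤ t') {c : FC} (hc : memHs t' c) : memHs t c :=
  Summable.of_nonneg_of_le (fun k => mul_nonneg (wt_nonneg _ _) (sq_nonneg _))
    (fun k => mul_le_mul_of_nonneg_right (wt_mono h k) (sq_nonneg _)) hc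

lemma hsNorm_mono {t t' : ℝ} (h : t ≤ t') {c : FC} (hc : memHs t' c) :
    hsNorm t c ≤ hsNorm t' c := by
  unfold hsNorm
  apply Real.sqrt_le_sqrt
  exact Summable.tsum_le_tsum
    (fun k => mul_le_mul_of_nonneg_right (wt_mono h k) (sq_nonneg _))
    (memHs_mono h hc) hc

/-- Domination principle. -/
lemma memHs_of_dom {t : ℝ} {c : FC} {b : ℤ → ℝ} (hb : ∀ k, ‖c k‖ ≤ b k)
    (hs : Summable fun k => wt t k * b k ^ 2) :
    memHs t c ∧ hsNorm t c ≤ Real.sqrt (∑' k, wt t k * b k ^ 2) := by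
  have hb0 : ∀ k, 0 ≤ b k := fun k => (norm_nonneg _).trans (hb k)
  have hle : ∀ k, wt t k * ‖c k‖ ^ 2 ≤ wt t k * b k ^ 2 := fun k =>
    mul_le_mul_of_nonneg_left (pow_le_pow_left₀ (norm_nonneg _) (hb k) 2) (wt_nonneg _ _)
  have hm : memHs t c := Summable.of_nonneg_of_le
    (fun k => mul_nonneg (wt_nonneg _ _) (sq_nonneg _)) hle hs
  exact ⟨hm, Real.sqrt_le_sqrt (Summable.tsum_le_tsum hle hm hs)⟩

/-! ### Multiplier operators -/

lemma helm_summand (t : ℝ) (c : FC) (k : ℤ) :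
    wt t k * ‖FC.helm c k‖ ^ 2 = wt (t+2) k * ‖c k‖ ^ 2 := by
  have : ‖FC.helm c k‖ = wt 1 k * ‖c k‖ := by
    rw [FC.helm, FC.mult]
    rw [norm_mul, Complex.norm_real, Real.norm_eq_abs, abs_of_pos (base_pos k), wt,
      Real.rpow_one]
  rw [this, mul_pow, wt_sq, ← mul_assoc, ← wt_add]
  norm_num

lemma helmInv_summand (t : ℝ) (c : FC) (k : ℤ) :
    wt t k * ‖FC.helmInv c k‖ ^ 2 = wt (t-2) k * ‖c k‖ ^ 2 := by
  have hpos : (0:ℝ) < (1 + (k:ℝ)^2)⁻¹ := inv_pos.mpr (base_pos k)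
  have : ‖FC.helmInv c k‖ = wt (-1) k * ‖c k‖ := by
    rw [FC.helmInv, FC.mult, norm_mul, Complex.norm_real, Real.norm_eq_abs,
      abs_of_pos hpos, wt_neg, wt, Real.rpow_one]
  rw [this, mul_pow, wt_sq, show (2:ℝ)*(-1) = -2 by norm_num,
    show t - 2 = t + -2 by ring, wt_add]
  ring

lemma memHs_helm {t : ℝ} {c : FC} (h : memHs (t+2) c) : memHs t (FC.helm c) := by
  unfold memHs
  exact (summable_congr (fun k => helm_summand t c k)).mpr h

lemma hsNorm_helm (t : ℝ) (c : FC) : hsNorm t (FC.helm c) = hsNorm (t+2) c := by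
  unfold hsNorm
  rw [tsum_congr (fun k => helm_summand t c k)]

lemma memHs_helmInv {t : ℝ} {c : FC} (h : memHs (t-2) c) : memHs t (FC.helmInv c) := by
  unfold memHs
  exact (summable_congr (fun k => helmInv_summand t c k)).mpr h

lemma hsNorm_helmInv (t : ℝ) (c : FC) : hsNorm t (FC.helmInv c) = hsNorm (t-2) c := by
  unfold hsNorm
  rw [tsum_congr (fun k => helmInv_summand t c k)]

lemma D1_norm (c : FC) (k : ℤ) : ‖FC.D1 c k‖ = |(k:ℝ)| * ‖c k‖ := by
  rw [FC.D1, norm_mul, norm_mul, Complex.norm_I, one_mul, Complex.norm_intCast]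

lemma D1_summand_le (t : ℝ) (c : FC) (k : ℤ) :
    wt t k * ‖FC.D1 c k‖ ^ 2 ≤ wt (t+1) k * ‖c k‖ ^ 2 := by
  have h1 : ‖FC.D1 c k‖^2 = (k:ℝ)^2 * ‖c k‖^2 := by rw [D1_norm, mul_pow, sq_abs]
  have h2 : wt 1 k = 1 + (k:ℝ)^2 := Real.rpow_one _
  rw [h1, wt_add, h2]
  nlinarith [mul_nonneg (wt_nonneg t k) (sq_nonneg (‖c k‖))]

lemma memHs_D1 {t : ℝ} {c : FC} (h : memHs (t+1) c) : memHs t (FC.D1 c) :=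
  Summable.of_nonneg_of_le (fun k => mul_nonneg (wt_nonneg _ _) (sq_nonneg _))
    (fun k => D1_summand_le t c k) h

lemma hsNorm_D1 {t : ℝ} {c : FC} (h : memHs (t+1) c) :
    hsNorm t (FC.D1 c) ≤ hsNorm (t+1) c := by
  unfold hsNorm
  exact Real.sqrt_le_sqrt (Summable.tsum_le_tsum (fun k => D1_summand_le t c k) (memHs_D1 h) h)

/-! ### Linear structure -/

lemma memHs_neg {t : ℝ} {c : FC} (h : memHs t c) : memHs t (-c) := by
  unfold memHs at h ⊢
  simpa using h

lemma hsNorm_neg (t : ℝ) (c : FC) : hsNorm t (-c) = hsNorm t c := by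
  unfold hsNorm
  simp

lemma smul_summand (r t : ℝ) (c : FC) (k : ℤ) :
    wt t k * ‖(r • c) k‖ ^ 2 = r ^ 2 * (wt t k * ‖c k‖ ^ 2) := by
  have : ‖(r • c) k‖ = |r| * ‖c k‖ := by
    simp [Pi.smul_apply, norm_smul, Real.norm_eq_abs]
  rw [this, mul_pow, sq_abs]
  ring

lemma memHs_smul {t : ℝ} (r : ℝ) {c : FC} (h : memHs t c) : memHs t (r • c) := by
  unfold memHs
  rw [summable_congr (fun k => smul_summand r t c k)]
  exact h.mul_left _

lemma hsNorm_smul (r t : ℝ) (c : FC) : hsNorm t (r • c) = |r| * hsNorm t c := by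
  unfold hsNorm
  rw [tsum_congr (fun k => smul_summand r t c k), tsum_mul_left, Real.sqrt_mul (sq_nonneg r),
    Real.sqrt_sq_eq_abs]

lemma memHs_add {t : ℝ} {c d : FC} (hc : memHs t c) (hd : memHs t d) :
    memHs t (c + d) ∧ hsNorm t (c + d) ≤ hsNorm t c + hsNorm t d := by
  set a : ℤ → ℝ := fun k => wt (t/2) k * ‖c k‖ with ha
  set b : ℤ → ℝ := fun k => wt (t/2) k * ‖d k‖ with hbdef
  have ha0 : ∀ k, 0 ≤ a k := fun k => mul_nonneg (wt_nonneg _ _) (norm_nonneg _)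
  have hb0 : ∀ k, 0 ≤ b k := fun k => mul_nonneg (wt_nonneg _ _) (norm_nonneg _)
  have ha2 : Summable (fun k => a k ^ 2) := (memHs_iff t c).mp hc
  have hb2 : Summable (fun k => b k ^ 2) := (memHs_iff t d).mp hd
  obtain ⟨hab, hable⟩ := tsum_cs ha0 hb0 ha2 hb2
  have hptle : ∀ k, wt t k * ‖(c + d) k‖ ^ 2 ≤ a k ^ 2 + 2 * (a k * b k) + b k ^ 2 := by
    intro k
    have h1 : ‖(c + d) k‖ ≤ ‖c k‖ + ‖d k‖ := norm_add_le _ _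
    have h2 : wt (t/2) k * ‖(c+d) k‖ ≤ a k + b k := by
      rw [ha, hbdef]
      calc wt (t/2) k * ‖(c+d) k‖ ≤ wt (t/2) k * (‖c k‖ + ‖d k‖) :=
            mul_le_mul_of_nonneg_left h1 (wt_nonneg _ _)
        _ = wt (t/2) k * ‖c k‖ + wt (t/2) k * ‖d k‖ := by ring
    calc wt t k * ‖(c + d) k‖ ^ 2 = (wt (t/2) k * ‖(c+d) k‖) ^ 2 := summand_eq _ _ _
      _ ≤ (a k + b k) ^ 2 := pow_le_pow_left₀
          (mul_nonneg (wt_nonneg _ _) (norm_nonneg _)) h2 2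
      _ = a k ^ 2 + 2 * (a k * b k) + b k ^ 2 := by ring
  have hSsum : Summable (fun k => a k ^ 2 + 2 * (a k * b k) + b k ^ 2) :=
    (ha2.add (hab.mul_left 2)).add hb2
  have hm : memHs t (c + d) := Summable.of_nonneg_of_le
    (fun k => mul_nonneg (wt_nonneg _ _) (sq_nonneg _)) hptle hSsum
  refine ⟨hm, ?_⟩
  have h3 : (∑' k, wt t k * ‖(c + d) k‖ ^ 2) ≤ (hsNorm t c + hsNorm t d) ^ 2 := by
    calc (∑' k, wt t k * ‖(c + d) k‖ ^ 2)
        ≤ ∑' k, (a k ^ 2 + 2 * (a k * b k) + b k ^ 2) := Summable.tsum_le_tsum hptle hm hSsum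
      _ = (∑' k, a k ^ 2) + 2 * (∑' k, a k * b k) + ∑' k, b k ^ 2 := by
          rw [Summable.tsum_add (ha2.add (hab.mul_left 2)) hb2, Summable.tsum_add ha2 (hab.mul_left 2),
            tsum_mul_left]
      _ ≤ hsNorm t c ^ 2 + 2 * (hsNorm t c * hsNorm t d) + hsNorm t d ^ 2 := by
          have e1 : (∑' k, a k ^ 2) = hsNorm t c ^ 2 := by
            rw [hsNorm_sq, tsum_congr (fun k => (summand_eq t c k))]
          have e2 : (∑' k, b k ^ 2) = hsNorm t d ^ 2 := by
            rw [hsNorm_sq, tsum_congr (fun k => (summand_eq t d k))]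
          have e3 : (∑' k, a k * b k) ≤ hsNorm t c * hsNorm t d := by
            calc (∑' k, a k * b k) ≤ Real.sqrt (∑' k, a k ^2) * Real.sqrt (∑' k, b k ^2) := hable
              _ = hsNorm t c * hsNorm t d := by rw [hsNorm_eq, hsNorm_eq]
          linarith [e1, e2, e3]
      _ = (hsNorm t c + hsNorm t d) ^ 2 := by ring
  calc hsNorm t (c + d) = Real.sqrt (∑' k, wt t k * ‖(c + d) k‖ ^ 2) := rfl
    _ ≤ Real.sqrt ((hsNorm t c + hsNorm t d) ^ 2) := Real.sqrt_le_sqrt h3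
    _ = hsNorm t c + hsNorm t d := Real.sqrt_sq
        (add_nonneg (hsNorm_nonneg _ _) (hsNorm_nonneg _ _))

/-! ### The product estimate (Sobolev algebra-type bound) -/

lemma rpow_half_sq (x : ℝ) : ((2:ℝ) ^ (x/2)) ^ 2 = 2 ^ x := by
  rw [← Real.rpow_natCast ((2:ℝ) ^ (x/2)) 2, ← Real.rpow_mul (by norm_num : (0:ℝ) ≤ 2)]
  norm_num

lemma mul_bound (t : ℝ) (f g : FC)
    (hf : Summable fun j => wt (|t|/2) j * ‖f j‖)
    (hg : memHs t g) :
    memHs t (FC.mul f g) ∧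
      hsNorm t (FC.mul f g) ≤
        2 ^ (|t|/2) * ((∑' j, wt (|t|/2) j * ‖f j‖) * hsNorm t g) := by
  set A : ℤ → ℝ := fun j => wt (|t|/2) j * ‖f j‖ with hAdef
  set B : ℤ → ℝ := fun m => wt (t/2) m * ‖g m‖ with hBdef
  have hA0 : ∀ j, 0 ≤ A j := fun j => mul_nonneg (wt_nonneg _ _) (norm_nonneg _)
  have hB0 : ∀ m, 0 ≤ B m := fun m => mul_nonneg (wt_nonneg _ _) (norm_nonneg _)
  have hB2 : Summable (fun m => B m ^ 2) := (memHs_iff t g).mp hg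
  have hBbd : ∀ m, B m ≤ hsNorm t g := fun m => coeff_le hg m
  have habs : |t/2| = |t|/2 := by rw [abs_div]; norm_num
  have hph : ∀ k j : ℤ, wt (t/2) k ≤ 2 ^ (|t|/2) * (wt (|t|/2) j * wt (t/2) (k - j)) := by
    intro k j
    have := peetre' (t/2) k j
    rwa [habs] at this
  have hph2 : ∀ k j : ℤ, wt (-(t/2)) (k - j) ≤ 2 ^ (|t|/2) * (wt (|t|/2) j * wt (-(t/2)) k) := by
    intro k j
    have := peetre' (-(t/2)) (k - j) (-j)
    rwa [show |(-(t/2))| = |t|/2 by rw [abs_neg, habs], wt_even,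
      show k - j - -j = k by ring] at this
  have hwinv : ∀ (r : ℝ) (j : ℤ), wt (-r) j * wt r j = 1 := by
    intro r j
    rw [← wt_add]
    norm_num [wt_zero]
  have hfj : ∀ j, ‖f j‖ = wt (-(|t|/2)) j * A j := by
    intro j
    rw [hAdef]
    simp only [← mul_assoc, hwinv, one_mul]
  have hgm : ∀ m, ‖g m‖ = wt (-(t/2)) m * B m := by
    intro m
    rw [hBdef]
    simp only [← mul_assoc, hwinv, one_mul]
  have hinner : ∀ k : ℤ, Summable (fun j => ‖f j‖ * ‖g (k - j)‖) := by
    intro k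
    refine Summable.of_nonneg_of_le (fun j => mul_nonneg (norm_nonneg _) (norm_nonneg _))
      (fun j => ?_) (hf.mul_left (2 ^ (|t|/2) * hsNorm t g * wt (-(t/2)) k))
    rw [hfj j, hgm (k - j)]
    have h1 : wt (-(t/2)) (k - j) * B (k - j)
        ≤ (2 ^ (|t|/2) * (wt (|t|/2) j * wt (-(t/2)) k)) * hsNorm t g :=
      mul_le_mul (hph2 k j) (hBbd _) (hB0 _)
        (mul_nonneg (Real.rpow_nonneg (by norm_num) _)
          (mul_nonneg (wt_nonneg _ _) (wt_nonneg _ _)))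
    calc wt (-(|t|/2)) j * A j * (wt (-(t/2)) (k - j) * B (k - j))
        ≤ wt (-(|t|/2)) j * A j * ((2 ^ (|t|/2) * (wt (|t|/2) j * wt (-(t/2)) k)) * hsNorm t g) :=
          mul_le_mul_of_nonneg_left h1 (mul_nonneg (wt_nonneg _ _) (hA0 j))
      _ = (wt (-(|t|/2)) j * wt (|t|/2) j) * (2 ^ (|t|/2) * hsNorm t g * wt (-(t/2)) k * A j) := by
          ring
      _ = 2 ^ (|t|/2) * hsNorm t g * wt (-(t/2)) k * A j := by rw [hwinv, one_mul]
  have hconv_sum : ∀ k : ℤ, Summable (fun j => A j * B (k - j)) := by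
    intro k
    refine Summable.of_nonneg_of_le (fun j => mul_nonneg (hA0 j) (hB0 _)) (fun j => ?_)
      (hf.mul_right (hsNorm t g))
    exact mul_le_mul_of_nonneg_left (hBbd _) (hA0 j)
  have coeffbd : ∀ k : ℤ, wt (t/2) k * ‖FC.mul f g k‖ ≤ 2 ^ (|t|/2) * ∑' j, A j * B (k - j) := by
    intro k
    have h1 : ‖FC.mul f g k‖ ≤ ∑' j, ‖f j‖ * ‖g (k - j)‖ := by
      have := norm_tsum_le_tsum_norm (f := fun j => f j * g (k - j))
        (by simpa [norm_mul] using hinner k)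
      simpa [FC.mul, norm_mul] using this
    calc wt (t/2) k * ‖FC.mul f g k‖ ≤ wt (t/2) k * ∑' j, ‖f j‖ * ‖g (k - j)‖ :=
          mul_le_mul_of_nonneg_left h1 (wt_nonneg _ _)
      _ = ∑' j, wt (t/2) k * (‖f j‖ * ‖g (k - j)‖) := tsum_mul_left.symm
      _ ≤ ∑' j, 2 ^ (|t|/2) * (A j * B (k - j)) := by
          refine Summable.tsum_le_tsum (fun j => ?_) ((hinner k).mul_left _) ((hconv_sum k).mul_left _)
          calc wt (t/2) k * (‖f j‖ * ‖g (k - j)‖)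
              ≤ (2 ^ (|t|/2) * (wt (|t|/2) j * wt (t/2) (k - j))) * (‖f j‖ * ‖g (k - j)‖) :=
                mul_le_mul_of_nonneg_right (hph k j)
                  (mul_nonneg (norm_nonneg _) (norm_nonneg _))
            _ = 2 ^ (|t|/2) * ((wt (|t|/2) j * ‖f j‖) * (wt (t/2) (k - j) * ‖g (k - j)‖)) := by
                ring
            _ = 2 ^ (|t|/2) * (A j * B (k - j)) := rfl
      _ = 2 ^ (|t|/2) * ∑' j, A j * B (k - j) := tsum_mul_left
  obtain ⟨hconv2, hyoung⟩ := young hA0 hB0 hf hB2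
  have hdom : ∀ k, wt t k * ‖FC.mul f g k‖ ^ 2 ≤ 2 ^ |t| * (∑' j, A j * B (k - j)) ^ 2 := by
    intro k
    rw [summand_eq]
    calc (wt (t/2) k * ‖FC.mul f g k‖) ^ 2 ≤ (2 ^ (|t|/2) * ∑' j, A j * B (k - j)) ^ 2 :=
          pow_le_pow_left₀ (mul_nonneg (wt_nonneg _ _) (norm_nonneg _)) (coeffbd k) 2
      _ = 2 ^ |t| * (∑' j, A j * B (k - j)) ^ 2 := by rw [mul_pow, rpow_half_sq]
  have hmem : memHs t (FC.mul f g) := Summable.of_nonneg_of_le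
    (fun k => mul_nonneg (wt_nonneg _ _) (sq_nonneg _)) hdom (hconv2.mul_left _)
  refine ⟨hmem, ?_⟩
  have hRHS0 : 0 ≤ 2 ^ (|t|/2) * ((∑' j, A j) * hsNorm t g) := by
    have : 0 ≤ ∑' j, A j := tsum_nonneg hA0
    have := hsNorm_nonneg t g
    positivity
  have hsq : (∑' k, wt t k * ‖FC.mul f g k‖ ^ 2)
      ≤ (2 ^ (|t|/2) * ((∑' j, A j) * hsNorm t g)) ^ 2 := by
    have hBsum : (∑' m, B m ^ 2) = hsNorm t g ^ 2 := by
      rw [hsNorm_sq, tsum_congr (fun m => summand_eq t g m)]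
    calc (∑' k, wt t k * ‖FC.mul f g k‖ ^ 2)
        ≤ ∑' k, 2 ^ |t| * (∑' j, A j * B (k - j)) ^ 2 :=
          Summable.tsum_le_tsum hdom hmem (hconv2.mul_left _)
      _ = 2 ^ |t| * ∑' k, (∑' j, A j * B (k - j)) ^ 2 := tsum_mul_left
      _ ≤ 2 ^ |t| * ((∑' j, A j) ^ 2 * ∑' m, B m ^ 2) :=
          mul_le_mul_of_nonneg_left hyoung (by positivity)
      _ = (2 ^ (|t|/2) * ((∑' j, A j) * hsNorm t g)) ^ 2 := by
          rw [hBsum, mul_pow, mul_pow, rpow_half_sq]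
  calc hsNorm t (FC.mul f g) = Real.sqrt (∑' k, wt t k * ‖FC.mul f g k‖ ^ 2) := rfl
    _ ≤ Real.sqrt ((2 ^ (|t|/2) * ((∑' j, A j) * hsNorm t g)) ^ 2) := Real.sqrt_le_sqrt hsq
    _ = 2 ^ (|t|/2) * ((∑' j, A j) * hsNorm t g) := Real.sqrt_sq hRHS0

/-! ### The constant `κ` and weighted `ℓ¹` bounds -/

def κ : ℝ := ∑' j : ℤ, wt (-2) j

lemma κ_summable : Summable fun j : ℤ => wt (-2) j := by
  have hnat : Summable (fun n : ℕ => wt (-2) (n : ℤ)) := by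
    have hbase : Summable (fun n : ℕ => 1 / ((n:ℝ) + 1) ^ 2) := by
      have h1 : Summable (fun n : ℕ => 1 / (n:ℝ) ^ 2) :=
        Real.summable_one_div_nat_pow.mpr (by norm_num)
      have := (summable_nat_add_iff 1).mpr h1
      refine this.congr fun n => ?_
      push_cast
      ring_nf
    refine Summable.of_nonneg_of_le (fun n => wt_nonneg _ _) (fun n => ?_)
      (hbase.mul_left 2)
    have hx : (0:ℝ) ≤ (n:ℝ) := Nat.cast_nonneg n
    have hb : (0:ℝ) < 1 + ((n:ℤ):ℝ)^2 := base_pos (n:ℤ)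
    have hw2 : wt 2 ((n:ℤ)) = (1 + ((n:ℤ):ℝ)^2)^2 := by
      rw [show (2:ℝ) = 2*1 by norm_num, ← wt_sq, wt, Real.rpow_one]
    rw [wt_neg, hw2]
    rw [show (2:ℝ) * (1 / ((n:ℝ) + 1) ^ 2) = 2 / ((n:ℝ)+1)^2 by ring,
      inv_eq_one_div, div_le_div_iff₀ (by positivity) (by positivity)]
    push_cast
    nlinarith [sq_nonneg ((n:ℝ) - 1), sq_nonneg ((n:ℝ)*(n:ℝ) - 1)]
  apply Summable.of_nat_of_neg hnat
  refine hnat.congr fun n => ?_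
  rw [show -(n:ℤ) = -(n:ℤ) from rfl, wt_even]

lemma κ_nonneg : 0 ≤ κ := tsum_nonneg fun j => wt_nonneg _ _

lemma wt_neg_one_sq (j : ℤ) : wt (-1) j ^ 2 = wt (-2) j := by
  rw [wt_sq]
  norm_num

/-- Weighted `ℓ¹` bound by the `H^{r+2}` norm. -/
lemma l1_bound {r : ℝ} {f : FC} (hf : memHs (r+2) f) :
    Summable (fun j => wt (r/2) j * ‖f j‖) ∧
      (∑' j, wt (r/2) j * ‖f j‖) ≤ Real.sqrt κ * hsNorm (r+2) f := by
  obtain ⟨hs, hle⟩ := tsum_cs (f := fun j => wt (-1) j)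
    (g := fun j => wt ((r+2)/2) j * ‖f j‖)
    (fun j => wt_nonneg _ _) (fun j => mul_nonneg (wt_nonneg _ _) (norm_nonneg _))
    (κ_summable.congr fun j => (wt_neg_one_sq j).symm)
    ((memHs_iff _ f).mp hf)
  have e : ∀ j, wt (-1) j * (wt ((r+2)/2) j * ‖f j‖) = wt (r/2) j * ‖f j‖ := by
    intro j
    rw [← mul_assoc, ← wt_add, show -1 + (r+2)/2 = r/2 by ring]
  refine ⟨hs.congr e, ?_⟩
  have e2 : (∑' j, wt (r/2) j * ‖f j‖) = ∑' j, wt (-1) j * (wt ((r+2)/2) j * ‖f j‖) :=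
    (tsum_congr e).symm
  rw [e2]
  refine hle.trans (le_of_eq ?_)
  congr 1
  · rw [tsum_congr (fun j => wt_neg_one_sq j)]
    rfl
  · rw [hsNorm_eq]

lemma l1_D1_le (r : ℝ) (ξ : FC) (j : ℤ) :
    wt (r/2) j * ‖FC.D1 ξ j‖ ≤ wt ((r+1)/2) j * ‖ξ j‖ := by
  rw [D1_norm]
  have h1 : |(j:ℝ)| ≤ wt (1/2) j := by
    rw [← Real.sqrt_sq_eq_abs, ← sqrt_wt 1 j]
    apply Real.sqrt_le_sqrt
    rw [wt, Real.rpow_one]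
    linarith [sq_nonneg (j:ℝ)]
  calc wt (r/2) j * (|(j:ℝ)| * ‖ξ j‖) ≤ wt (r/2) j * (wt (1/2) j * ‖ξ j‖) := by
        apply mul_le_mul_of_nonneg_left _ (wt_nonneg _ _)
        exact mul_le_mul_of_nonneg_right h1 (norm_nonneg _)
    _ = (wt (r/2) j * wt (1/2) j) * ‖ξ j‖ := by ring
    _ = wt ((r+1)/2) j * ‖ξ j‖ := by rw [← wt_add, show r/2 + 1/2 = (r+1)/2 by ring]

/-- Summability and bound for the weighted `ℓ¹` norm of `D1 ξ`. -/
lemma l1_D1_bound {r : ℝ} {ξ : FC} (hξ : memHs (r+3) ξ) :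
    Summable (fun j => wt (r/2) j * ‖FC.D1 ξ j‖) ∧
      (∑' j, wt (r/2) j * ‖FC.D1 ξ j‖) ≤ Real.sqrt κ * hsNorm (r+3) ξ := by
  have hξ' : memHs ((r+1)+2) ξ := by rw [show r+1+2 = r+3 by ring]; exact hξ
  obtain ⟨hs, hle⟩ := l1_bound (r := r+1) hξ'
  have hsD : Summable (fun j => wt (r/2) j * ‖FC.D1 ξ j‖) :=
    Summable.of_nonneg_of_le (fun j => mul_nonneg (wt_nonneg _ _) (norm_nonneg _))
      (fun j => l1_D1_le r ξ j) hs
  refine ⟨hsD, ?_⟩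
  calc (∑' j, wt (r/2) j * ‖FC.D1 ξ j‖) ≤ ∑' j, wt ((r+1)/2) j * ‖ξ j‖ :=
        Summable.tsum_le_tsum (fun j => l1_D1_le r ξ j) hsD hs
    _ ≤ Real.sqrt κ * hsNorm ((r+1)+2) ξ := hle
    _ = Real.sqrt κ * hsNorm (r+3) ξ := by rw [show r+1+2 = r+3 by ring]

/-! ### Bounds for the Lie derivative -/

/-- The constant in the `lie` estimate. -/
def KC (t : ℝ) : ℝ := 2 ^ (|t|/2) * (2 * Real.sqrt κ)

lemma KC_nonneg (t : ℝ) : 0 ≤ KC t := by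
  unfold KC
  have := Real.sqrt_nonneg κ
  positivity

lemma lie_bound (t : ℝ) (ξ c : FC) (hξ : memHs (|t|+3) ξ) (hc : memHs (t+1) c) :
    memHs t (FC.lie ξ c) ∧
      hsNorm t (FC.lie ξ c) ≤ KC t * hsNorm (|t|+3) ξ * hsNorm (t+1) c := by
  have habs0 : (0:ℝ) ≤ |t| := abs_nonneg t
  have hξ2 : memHs (|t|+2) ξ := memHs_mono (by linarith) hξ
  have hξ2' : memHs (|t|+2) ξ := hξ2
  have hl1 : Summable (fun j => wt (|t|/2) j * ‖ξ j‖) ∧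
      (∑' j, wt (|t|/2) j * ‖ξ j‖) ≤ Real.sqrt κ * hsNorm (|t|+2) ξ := l1_bound hξ2
  have hl2 : Summable (fun j => wt (|t|/2) j * ‖FC.D1 ξ j‖) ∧
      (∑' j, wt (|t|/2) j * ‖FC.D1 ξ j‖) ≤ Real.sqrt κ * hsNorm (|t|+3) ξ := l1_D1_bound hξ
  have hcd : memHs t (FC.D1 c) := memHs_D1 hc
  have hct : memHs t c := memHs_mono (by linarith) hc
  obtain ⟨hm1, hb1⟩ := mul_bound t ξ (FC.D1 c) hl1.1 hcd
  obtain ⟨hm2, hb2⟩ := mul_bound t (FC.D1 ξ) c hl2.1 hct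
  obtain ⟨hmadd, hbadd⟩ := memHs_add hm1 hm2
  have hNc : hsNorm t (FC.D1 c) ≤ hsNorm (t+1) c := hsNorm_D1 hc
  have hNc2 : hsNorm t c ≤ hsNorm (t+1) c := hsNorm_mono (by linarith) hc
  have hNξ : hsNorm (|t|+2) ξ ≤ hsNorm (|t|+3) ξ := hsNorm_mono (by linarith) hξ
  have h2t0 : (0:ℝ) ≤ 2 ^ (|t|/2) := Real.rpow_nonneg (by norm_num) _
  have hsk0 : 0 ≤ Real.sqrt κ := Real.sqrt_nonneg κ
  have hNξ0 : 0 ≤ hsNorm (|t|+3) ξ := hsNorm_nonneg _ _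
  have hNc0 : 0 ≤ hsNorm (t+1) c := hsNorm_nonneg _ _
  refine ⟨hmadd, ?_⟩
  have hb1' : hsNorm t (FC.mul ξ (FC.D1 c)) ≤
      2 ^ (|t|/2) * (Real.sqrt κ * hsNorm (|t|+3) ξ) * hsNorm (t+1) c := by
    refine hb1.trans ?_
    have := hl1.2.trans (mul_le_mul_of_nonneg_left hNξ hsk0)
    calc 2 ^ (|t|/2) * ((∑' j, wt (|t|/2) j * ‖ξ j‖) * hsNorm t (FC.D1 c))
        ≤ 2 ^ (|t|/2) * ((Real.sqrt κ * hsNorm (|t|+3) ξ) * hsNorm (t+1) c) := by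
          apply mul_le_mul_of_nonneg_left _ h2t0
          exact mul_le_mul this hNc (hsNorm_nonneg _ _) (by positivity)
      _ = 2 ^ (|t|/2) * (Real.sqrt κ * hsNorm (|t|+3) ξ) * hsNorm (t+1) c := by ring
  have hb2' : hsNorm t (FC.mul (FC.D1 ξ) c) ≤
      2 ^ (|t|/2) * (Real.sqrt κ * hsNorm (|t|+3) ξ) * hsNorm (t+1) c := by
    refine hb2.trans ?_
    calc 2 ^ (|t|/2) * ((∑' j, wt (|t|/2) j * ‖FC.D1 ξ j‖) * hsNorm t c)
        ≤ 2 ^ (|t|/2) * ((Real.sqrt κ * hsNorm (|t|+3) ξ) * hsNorm (t+1) c) := by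
          apply mul_le_mul_of_nonneg_left _ h2t0
          exact mul_le_mul hl2.2 hNc2 (hsNorm_nonneg _ _) (by positivity)
      _ = 2 ^ (|t|/2) * (Real.sqrt κ * hsNorm (|t|+3) ξ) * hsNorm (t+1) c := by ring
  calc hsNorm t (FC.lie ξ c)
      ≤ hsNorm t (FC.mul ξ (FC.D1 c)) + hsNorm t (FC.mul (FC.D1 ξ) c) := hbadd
    _ ≤ 2 ^ (|t|/2) * (Real.sqrt κ * hsNorm (|t|+3) ξ) * hsNorm (t+1) c
        + 2 ^ (|t|/2) * (Real.sqrt κ * hsNorm (|t|+3) ξ) * hsNorm (t+1) c :=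
        add_le_add hb1' hb2'
    _ = KC t * hsNorm (|t|+3) ξ * hsNorm (t+1) c := by
        unfold KC
        ring

lemma lie2_bound (t : ℝ) (ξ c : FC) (hξ : memHs (|t|+4) ξ) (hc : memHs (t+2) c) :
    memHs t (FC.lie2 ξ c) ∧
      hsNorm t (FC.lie2 ξ c) ≤
        (KC t * KC (t+1)) * hsNorm (|t|+4) ξ ^ 2 * hsNorm (t+2) c := by
  have habs : |t+1| + 3 ≤ |t| + 4 := by
    have := abs_add_le t 1
    simp at this
    linarith
  have hξin : memHs (|t+1|+3) ξ := memHs_mono habs hξ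
  have hcin : memHs ((t+1)+1) c := by rw [show t+1+1 = t+2 by ring]; exact hc
  obtain ⟨hmin, hbin⟩ := lie_bound (t+1) ξ c hξin hcin
  have hξout : memHs (|t|+3) ξ := memHs_mono (by linarith [abs_nonneg t]) hξ
  obtain ⟨hmout, hbout⟩ := lie_bound t ξ (FC.lie ξ c) hξout hmin
  refine ⟨hmout, ?_⟩
  have h1 : hsNorm (|t|+3) ξ ≤ hsNorm (|t|+4) ξ := hsNorm_mono (by linarith) hξ
  have h2 : hsNorm (|t+1|+3) ξ ≤ hsNorm (|t|+4) ξ := hsNorm_mono habs hξ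
  have e3 : hsNorm ((t+1)+1) c = hsNorm (t+2) c := by rw [show t+1+1 = t+2 by ring]
  have hb2 : hsNorm (t+1) (FC.lie ξ c) ≤ KC (t+1) * hsNorm (|t|+4) ξ * hsNorm (t+2) c := by
    refine hbin.trans ?_
    rw [e3]
    apply mul_le_mul_of_nonneg_right _ (hsNorm_nonneg _ _)
    exact mul_le_mul_of_nonneg_left h2 (KC_nonneg _)
  calc hsNorm t (FC.lie2 ξ c) ≤ KC t * hsNorm (|t|+3) ξ * hsNorm (t+1) (FC.lie ξ c) := hbout
    _ ≤ KC t * hsNorm (|t|+4) ξ * (KC (t+1) * hsNorm (|t|+4) ξ * hsNorm (t+2) c) := by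
        apply mul_le_mul
        · exact mul_le_mul_of_nonneg_left h1 (KC_nonneg _)
        · exact hb2
        · exact hsNorm_nonneg _ _
        · exact mul_nonneg (KC_nonneg _) (hsNorm_nonneg _ _)
    _ = (KC t * KC (t+1)) * hsNorm (|t|+4) ξ ^ 2 * hsNorm (t+2) c := by ring

/-! ### Infinite sums of functions -/

lemma tsumFC_bound {t : ℝ} {F : ℕ → FC} {ε : ℕ → ℝ}
    (hmem : ∀ k, memHs t (F k)) (hbd : ∀ k, hsNorm t (F k) ≤ ε k)
    (hε0 : ∀ k, 0 ≤ ε k) (hεs : Summable ε) :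
    memHs t (FC.tsumFC F) ∧ hsNorm t (FC.tsumFC F) ≤ ∑' k, ε k := by
  set G : ℕ → ℤ → ℝ := fun k m => wt (t/2) m * ‖F k m‖ with hGdef
  have hG0 : ∀ k m, 0 ≤ G k m := fun k m => mul_nonneg (wt_nonneg _ _) (norm_nonneg _)
  have hGbd : ∀ k m, G k m ≤ ε k := fun k m => (coeff_le (hmem k) m).trans (hbd k)
  have hptw : ∀ m, Summable fun k => G k m :=
    fun m => Summable.of_nonneg_of_le (fun k => hG0 k m) (fun k => hGbd k m) hεs
  have hsq : ∀ k, Summable (fun m => G k m ^ 2) := fun k => (memHs_iff t (F k)).mp (hmem k)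
  have hbd' : ∀ k, Real.sqrt (∑' m, G k m ^ 2) ≤ ε k := by
    intro k
    rw [← hsNorm_eq]
    exact hbd k
  obtain ⟨hsum, hle⟩ := minkowski_tsum hG0 hε0 hsq hbd' hεs hptw
  have hFm : ∀ m, Summable fun k => ‖F k m‖ := by
    intro m
    refine Summable.of_nonneg_of_le (fun k => norm_nonneg _) (fun k => ?_)
      (hεs.mul_left (wt (-(t/2)) m))
    have : ‖F k m‖ = wt (-(t/2)) m * G k m := by
      rw [hGdef]
      simp only [← mul_assoc, ← wt_add]
      norm_num [wt_zero]
    rw [this]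
    exact mul_le_mul_of_nonneg_left (hGbd k m) (wt_nonneg _ _)
  have hnorm : ∀ m, wt (t/2) m * ‖FC.tsumFC F m‖ ≤ ∑' k, G k m := by
    intro m
    have h1 : ‖FC.tsumFC F m‖ ≤ ∑' k, ‖F k m‖ := norm_tsum_le_tsum_norm (hFm m)
    calc wt (t/2) m * ‖FC.tsumFC F m‖ ≤ wt (t/2) m * ∑' k, ‖F k m‖ :=
          mul_le_mul_of_nonneg_left h1 (wt_nonneg _ _)
      _ = ∑' k, G k m := tsum_mul_left.symm
  have hdom : ∀ m, wt t m * ‖FC.tsumFC F m‖ ^ 2 ≤ (∑' k, G k m) ^ 2 := by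
    intro m
    rw [summand_eq]
    exact pow_le_pow_left₀ (mul_nonneg (wt_nonneg _ _) (norm_nonneg _)) (hnorm m) 2
  have hmemT : memHs t (FC.tsumFC F) := Summable.of_nonneg_of_le
    (fun m => mul_nonneg (wt_nonneg _ _) (sq_nonneg _)) hdom hsum
  refine ⟨hmemT, ?_⟩
  calc hsNorm t (FC.tsumFC F) = Real.sqrt (∑' m, wt t m * ‖FC.tsumFC F m‖ ^ 2) := rfl
    _ ≤ Real.sqrt (∑' m, (∑' k, G k m) ^ 2) :=
        Real.sqrt_le_sqrt (Summable.tsum_le_tsum hdom hmemT hsum)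
    _ ≤ ∑' k, ε k := hle

/-! ### Miscellaneous -/

lemma sq_summable {x : ℕ → ℝ} (hx0 : ∀ k, 0 ≤ x k) (hx : Summable x) :
    Summable (fun k => x k ^ 2) := by
  refine Summable.of_nonneg_of_le (fun k => sq_nonneg _) (fun k => ?_) (hx.mul_left (∑' k, x k))
  rw [pow_two]
  exact mul_le_mul_of_nonneg_right (Summable.le_tsum hx k (fun n _ => hx0 n)) (hx0 k)

lemma sqrt_tsum_sq_le {x : ℕ → ℝ} (hx0 : ∀ k, 0 ≤ x k) (hx : Summable x) :
    Real.sqrt (∑' k, x k ^ 2) ≤ ∑' k, x k := by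
  have h1 : (∑' k, x k ^ 2) ≤ (∑' k, x k) ^ 2 := by
    calc (∑' k, x k ^ 2) ≤ ∑' k, (∑' n, x n) * x k := by
          refine Summable.tsum_le_tsum (fun k => ?_) (sq_summable hx0 hx) (hx.mul_left _)
          rw [pow_two]
          exact mul_le_mul_of_nonneg_right (Summable.le_tsum hx k (fun n _ => hx0 n)) (hx0 k)
      _ = (∑' k, x k) ^ 2 := by rw [tsum_mul_left]; ring
  calc Real.sqrt (∑' k, x k ^ 2) ≤ Real.sqrt ((∑' k, x k) ^ 2) := Real.sqrt_le_sqrt h1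
    _ = ∑' k, x k := Real.sqrt_sq (tsum_nonneg hx0)

lemma pairNorm_nonneg (s₁ s₂ : ℝ) (c d : FC) : 0 ≤ FC.pairNorm s₁ s₂ c d := Real.sqrt_nonneg _

lemma pairNorm_le (s₁ s₂ : ℝ) (c d : FC) :
    FC.pairNorm s₁ s₂ c d ≤ hsNorm s₁ c + hsNorm s₂ d := by
  unfold FC.pairNorm
  have h1 : hsNorm s₁ c ^ 2 + hsNorm s₂ d ^ 2 ≤ (hsNorm s₁ c + hsNorm s₂ d) ^ 2 := by
    nlinarith [hsNorm_nonneg s₁ c, hsNorm_nonneg s₂ d]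
  calc Real.sqrt (hsNorm s₁ c ^ 2 + hsNorm s₂ d ^ 2)
      ≤ Real.sqrt ((hsNorm s₁ c + hsNorm s₂ d) ^ 2) := Real.sqrt_le_sqrt h1
    _ = hsNorm s₁ c + hsNorm s₂ d :=
        Real.sqrt_sq (add_nonneg (hsNorm_nonneg _ _) (hsNorm_nonneg _ _))

lemma left_le_pairNorm (s₁ s₂ : ℝ) (c d : FC) : hsNorm s₁ c ≤ FC.pairNorm s₁ s₂ c d := by
  unfold FC.pairNorm
  calc hsNorm s₁ c = Real.sqrt (hsNorm s₁ c ^ 2) := (Real.sqrt_sq (hsNorm_nonneg _ _)).symm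
    _ ≤ Real.sqrt (hsNorm s₁ c ^ 2 + hsNorm s₂ d ^ 2) :=
        Real.sqrt_le_sqrt (by nlinarith [sq_nonneg (hsNorm s₂ d)])

lemma right_le_pairNorm (s₁ s₂ : ℝ) (c d : FC) : hsNorm s₂ d ≤ FC.pairNorm s₁ s₂ c d := by
  unfold FC.pairNorm
  calc hsNorm s₂ d = Real.sqrt (hsNorm s₂ d ^ 2) := (Real.sqrt_sq (hsNorm_nonneg _ _)).symm
    _ ≤ Real.sqrt (hsNorm s₁ c ^ 2 + hsNorm s₂ d ^ 2) :=
        Real.sqrt_le_sqrt (by nlinarith [sq_nonneg (hsNorm s₁ c)])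

lemma pairNorm_sq (s₁ s₂ : ℝ) (c d : FC) :
    FC.pairNorm s₁ s₂ c d ^ 2 = hsNorm s₁ c ^ 2 + hsNorm s₂ d ^ 2 :=
  Real.sq_sqrt (add_nonneg (sq_nonneg _) (sq_nonneg _))
end SP

/-- Let `s > 7/2` and `Σ_k ‖ξ_k‖_{H^σ} < ∞` for all `σ ≥ 0`.  Then there is
`C > 0` such that `‖g(X)‖_{H^{s-2}×H^{s-3}} ≤ C (1 + ‖(u,η)‖²_{H^s×H^{s-1}})` and
`(Σ_k ‖h^k(X)‖²_{H^{s-1}×H^{s-2}})^{1/2} ≤ C ‖(u,η)‖_{H^s×H^{s-1}}`. -/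
theorem statement2 (s : ℝ) (hs : 7 / 2 < s) (ξ : ℕ → FC)
    (hξmem : ∀ σ : ℝ, 0 ≤ σ → ∀ k : ℕ, FC.memHs σ (ξ k))
    (hξreal : ∀ k : ℕ, FC.isReal (ξ k))
    (hξsum : ∀ σ : ℝ, 0 ≤ σ → Summable fun k : ℕ => FC.hsNorm σ (ξ k)) :
    ∃ C > (0 : ℝ), ∀ u η : FC,
      FC.memHs s u → FC.memHs (s - 1) η → FC.isReal u → FC.isReal η →
      (FC.pairNorm (s - 2) (s - 3) (gCH1 ξ u) (gCH2 ξ u η)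
          ≤ C * (1 + FC.pairNorm s (s - 1) u η ^ 2)) ∧
      (Summable (fun k : ℕ => FC.pairNorm (s - 1) (s - 2) (hCH1 ξ k u) (hCH2 ξ k η) ^ 2) ∧
        Real.sqrt (∑' k : ℕ, FC.pairNorm (s - 1) (s - 2) (hCH1 ξ k u) (hCH2 ξ k η) ^ 2)
          ≤ C * FC.pairNorm s (s - 1) u η) := by
  classical
  have hk0 : 0 ≤ Real.sqrt SP.κ := Real.sqrt_nonneg _
  have habs2 : |s-2| = s-2 := abs_of_pos (by linarith)
  have habs3 : |s-3| = s-3 := abs_of_pos (by linarith)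
  -- ξ norm families and their sums
  have hXmem : ∀ k, FC.memHs (|s-4|+4) (ξ k) :=
    fun k => hξmem _ (by linarith [abs_nonneg (s-4)]) k
  have hYmem : ∀ k, FC.memHs (|s-3|+4) (ξ k) :=
    fun k => hξmem _ (by linarith [abs_nonneg (s-3)]) k
  have hZmem : ∀ k, FC.memHs (|s-3|+3) (ξ k) :=
    fun k => hξmem _ (by linarith [abs_nonneg (s-3)]) k
  have hWmem : ∀ k, FC.memHs (|s-2|+3) (ξ k) :=
    fun k => hξmem _ (by linarith [abs_nonneg (s-2)]) k
  have hXs : Summable (fun k => FC.hsNorm (|s-4|+4) (ξ k)) :=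
    hξsum _ (by linarith [abs_nonneg (s-4)])
  have hYs : Summable (fun k => FC.hsNorm (|s-3|+4) (ξ k)) :=
    hξsum _ (by linarith [abs_nonneg (s-3)])
  have hZs : Summable (fun k => FC.hsNorm (|s-3|+3) (ξ k)) :=
    hξsum _ (by linarith [abs_nonneg (s-3)])
  have hWs : Summable (fun k => FC.hsNorm (|s-2|+3) (ξ k)) :=
    hξsum _ (by linarith [abs_nonneg (s-2)])
  have hX0 : ∀ k, 0 ≤ FC.hsNorm (|s-4|+4) (ξ k) := fun k => SP.hsNorm_nonneg _ _
  have hY0 : ∀ k, 0 ≤ FC.hsNorm (|s-3|+4) (ξ k) := fun k => SP.hsNorm_nonneg _ _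
  have hZ0 : ∀ k, 0 ≤ FC.hsNorm (|s-3|+3) (ξ k) := fun k => SP.hsNorm_nonneg _ _
  have hW0 : ∀ k, 0 ≤ FC.hsNorm (|s-2|+3) (ξ k) := fun k => SP.hsNorm_nonneg _ _
  have hX2s : Summable (fun k => FC.hsNorm (|s-4|+4) (ξ k) ^ 2) := SP.sq_summable hX0 hXs
  have hY2s : Summable (fun k => FC.hsNorm (|s-3|+4) (ξ k) ^ 2) := SP.sq_summable hY0 hYs
  set SX := ∑' k, FC.hsNorm (|s-4|+4) (ξ k) ^ 2 with hSXdef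
  set SY := ∑' k, FC.hsNorm (|s-3|+4) (ξ k) ^ 2 with hSYdef
  set SZ := ∑' k, FC.hsNorm (|s-3|+3) (ξ k) with hSZdef
  set SW := ∑' k, FC.hsNorm (|s-2|+3) (ξ k) with hSWdef
  have hSX0 : 0 ≤ SX := tsum_nonneg fun k => sq_nonneg _
  have hSY0 : 0 ≤ SY := tsum_nonneg fun k => sq_nonneg _
  have hSZ0 : 0 ≤ SZ := tsum_nonneg hZ0
  have hSW0 : 0 ≤ SW := tsum_nonneg hW0
  have h2a0 : (0:ℝ) ≤ 2 ^ (|s-2|/2) := Real.rpow_nonneg (by norm_num) _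
  have h2b0 : (0:ℝ) ≤ 2 ^ (|s-3|/2) := Real.rpow_nonneg (by norm_num) _
  -- the six coefficients
  set c1 : ℝ := 2 ^ (|s-2|/2) * Real.sqrt SP.κ with hc1def
  set c2 : ℝ := (1/2) * ((SP.KC (s-4) * SP.KC (s-4+1)) * SX) with hc2def
  set c3 : ℝ := 2 ^ (|s-3|/2) * Real.sqrt SP.κ with hc3def
  set c4 : ℝ := (1/2) * ((SP.KC (s-3) * SP.KC (s-3+1)) * SY) with hc4def
  set c5 : ℝ := SP.KC (s-3) * SZ with hc5def
  set c6 : ℝ := SP.KC (s-2) * SW with hc6def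
  have hc10 : 0 ≤ c1 := mul_nonneg h2a0 hk0
  have hc20 : 0 ≤ c2 := by
    rw [hc2def]
    exact mul_nonneg (by norm_num)
      (mul_nonneg (mul_nonneg (SP.KC_nonneg _) (SP.KC_nonneg _)) hSX0)
  have hc30 : 0 ≤ c3 := mul_nonneg h2b0 hk0
  have hc40 : 0 ≤ c4 := by
    rw [hc4def]
    exact mul_nonneg (by norm_num)
      (mul_nonneg (mul_nonneg (SP.KC_nonneg _) (SP.KC_nonneg _)) hSY0)
  have hc50 : 0 ≤ c5 := mul_nonneg (SP.KC_nonneg _) hSZ0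
  have hc60 : 0 ≤ c6 := mul_nonneg (SP.KC_nonneg _) hSW0
  refine ⟨c1 + c2 + c3 + c4 + c5 + c6 + 1, by linarith, ?_⟩
  intro u η hu hη _ _
  set Nu := FC.hsNorm s u with hNudef
  set Ne := FC.hsNorm (s-1) η with hNedef
  set P := FC.pairNorm s (s-1) u η with hPdef
  have hNu0 : 0 ≤ Nu := SP.hsNorm_nonneg _ _
  have hNe0 : 0 ≤ Ne := SP.hsNorm_nonneg _ _
  have hP0 : 0 ≤ P := SP.pairNorm_nonneg _ _ _ _
  have hNuP : Nu ≤ P := SP.left_le_pairNorm s (s-1) u η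
  have hNeP : Ne ≤ P := SP.right_le_pairNorm s (s-1) u η
  ----------------------------------------------------------------
  -- Part 1a : `mul u (D1 u)` in `H^{s-2}`
  have humem2 : FC.memHs (|s-2|+2) u := by
    rw [habs2, show s-2+2 = s by ring]; exact hu
  obtain ⟨hfsum2, hfbd2⟩ := SP.l1_bound (r := |s-2|) humem2
  have he2 : FC.hsNorm (|s-2|+2) u = Nu := by rw [habs2, show s-2+2 = s by ring]
  have hgD2 : FC.memHs (s-2) (FC.D1 u) := SP.memHs_D1 (SP.memHs_mono (by linarith) hu)
  have hND2 : FC.hsNorm (s-2) (FC.D1 u) ≤ Nu :=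
    (SP.hsNorm_D1 (SP.memHs_mono (by linarith) hu)).trans (SP.hsNorm_mono (by linarith) hu)
  obtain ⟨hmA, hbA⟩ := SP.mul_bound (s-2) u (FC.D1 u) hfsum2 hgD2
  have hbA' : FC.hsNorm (s-2) (FC.mul u (FC.D1 u)) ≤ c1 * (Nu * Nu) := by
    refine hbA.trans ?_
    have h1 : (∑' j, FC.wt (|s-2|/2) j * ‖u j‖) ≤ Real.sqrt SP.κ * Nu := by
      rw [← he2]; exact hfbd2
    calc 2 ^ (|s-2|/2) * ((∑' j, FC.wt (|s-2|/2) j * ‖u j‖) * FC.hsNorm (s-2) (FC.D1 u))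
        ≤ 2 ^ (|s-2|/2) * ((Real.sqrt SP.κ * Nu) * Nu) := by
          apply mul_le_mul_of_nonneg_left _ h2a0
          exact mul_le_mul h1 hND2 (SP.hsNorm_nonneg _ _) (mul_nonneg hk0 hNu0)
      _ = c1 * (Nu * Nu) := by rw [hc1def]; ring
  ----------------------------------------------------------------
  -- Part 1b : the series term of gCH1
  have hhelm_mem : FC.memHs ((s-4)+2) (FC.helm u) := by
    apply SP.memHs_helm
    rw [show s-4+2+2 = s by ring]; exact hu
  have hNhelm : FC.hsNorm ((s-4)+2) (FC.helm u) = Nu := by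
    rw [SP.hsNorm_helm, show s-4+2+2 = s by ring]
  have hlie2 : ∀ k, FC.memHs (s-4) (FC.lie2 (ξ k) (FC.helm u)) ∧
      FC.hsNorm (s-4) (FC.lie2 (ξ k) (FC.helm u)) ≤
        (SP.KC (s-4) * SP.KC ((s-4)+1)) * FC.hsNorm (|s-4|+4) (ξ k) ^ 2 *
          FC.hsNorm ((s-4)+2) (FC.helm u) :=
    fun k => SP.lie2_bound (s-4) (ξ k) (FC.helm u) (hXmem k) hhelm_mem
  have hεs : Summable (fun k =>
      (SP.KC (s-4) * SP.KC ((s-4)+1)) * FC.hsNorm (|s-4|+4) (ξ k) ^ 2 * Nu) :=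
    (hX2s.mul_left _).mul_right _
  obtain ⟨hmT, hbT⟩ := SP.tsumFC_bound (t := s-4)
    (F := fun k => FC.lie2 (ξ k) (FC.helm u))
    (ε := fun k => (SP.KC (s-4) * SP.KC ((s-4)+1)) * FC.hsNorm (|s-4|+4) (ξ k) ^ 2 * Nu)
    (fun k => (hlie2 k).1)
    (fun k => by rw [← hNhelm]; exact (hlie2 k).2)
    (fun k => mul_nonneg (mul_nonneg (mul_nonneg (SP.KC_nonneg _) (SP.KC_nonneg _))
      (sq_nonneg _)) hNu0)
    hεs
  have hbT' : FC.hsNorm (s-4) (FC.tsumFC fun k => FC.lie2 (ξ k) (FC.helm u)) ≤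
      ((SP.KC (s-4) * SP.KC ((s-4)+1)) * SX) * Nu := by
    refine hbT.trans (le_of_eq ?_)
    rw [show (fun k => (SP.KC (s-4) * SP.KC ((s-4)+1)) * FC.hsNorm (|s-4|+4) (ξ k) ^ 2 * Nu)
        = fun k => ((SP.KC (s-4) * SP.KC ((s-4)+1)) * Nu) * FC.hsNorm (|s-4|+4) (ξ k) ^ 2
        from funext fun k => by ring, tsum_mul_left, hSXdef]
    ring
  have hmH : FC.memHs (s-2) (FC.helmInv (FC.tsumFC fun k => FC.lie2 (ξ k) (FC.helm u))) := by
    apply SP.memHs_helmInv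
    rw [show s-2-2 = s-4 by ring]; exact hmT
  have hbH : FC.hsNorm (s-2) (FC.helmInv (FC.tsumFC fun k => FC.lie2 (ξ k) (FC.helm u))) ≤
      ((SP.KC (s-4) * SP.KC ((s-4)+1)) * SX) * Nu := by
    rw [SP.hsNorm_helmInv, show s-2-2 = s-4 by ring]; exact hbT'
  -- assemble gCH1
  obtain ⟨hmG1, hbG1⟩ := SP.memHs_add (SP.memHs_neg hmA) (SP.memHs_smul (1/2 : ℝ) hmH)
  have hbG1' : FC.hsNorm (s-2) (gCH1 ξ u) ≤ c1 * (Nu * Nu) + c2 * Nu := by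
    have e : gCH1 ξ u = -(FC.mul u (FC.D1 u)) +
        (1/2 : ℝ) • FC.helmInv (FC.tsumFC fun k => FC.lie2 (ξ k) (FC.helm u)) := rfl
    rw [e]
    refine hbG1.trans ?_
    rw [SP.hsNorm_neg, SP.hsNorm_smul]
    have h1 : |(1/2 : ℝ)| = 1/2 := by norm_num
    rw [h1]
    have h2 : (1/2 : ℝ) *
        FC.hsNorm (s-2) (FC.helmInv (FC.tsumFC fun k => FC.lie2 (ξ k) (FC.helm u))) ≤
        c2 * Nu := by
      rw [hc2def]
      calc (1/2 : ℝ) * FC.hsNorm (s-2) (FC.helmInv _) ≤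
          (1/2 : ℝ) * (((SP.KC (s-4) * SP.KC ((s-4)+1)) * SX) * Nu) := by
            apply mul_le_mul_of_nonneg_left hbH (by norm_num)
        _ = 1/2 * ((SP.KC (s-4) * SP.KC (s-4+1)) * SX) * Nu := by ring
    linarith [hbA']
  ----------------------------------------------------------------
  -- Part 2a : `mul u (D1 η)` in `H^{s-3}`
  have humem3 : FC.memHs (|s-3|+2) u := by
    rw [habs3, show s-3+2 = s-1 by ring]
    exact SP.memHs_mono (by linarith) hu
  obtain ⟨hfsum3, hfbd3⟩ := SP.l1_bound (r := |s-3|) humem3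
  have he3 : FC.hsNorm (|s-3|+2) u ≤ Nu := by
    rw [habs3, show s-3+2 = s-1 by ring]
    exact SP.hsNorm_mono (by linarith) hu
  have hgD3 : FC.memHs (s-3) (FC.D1 η) := SP.memHs_D1 (SP.memHs_mono (by linarith) hη)
  have hND3 : FC.hsNorm (s-3) (FC.D1 η) ≤ Ne :=
    (SP.hsNorm_D1 (SP.memHs_mono (by linarith) hη)).trans (SP.hsNorm_mono (by linarith) hη)
  obtain ⟨hmB, hbB⟩ := SP.mul_bound (s-3) u (FC.D1 η) hfsum3 hgD3
  have hbB' : FC.hsNorm (s-3) (FC.mul u (FC.D1 η)) ≤ c3 * (Nu * Ne) := by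
    refine hbB.trans ?_
    have h1 : (∑' j, FC.wt (|s-3|/2) j * ‖u j‖) ≤ Real.sqrt SP.κ * Nu :=
      hfbd3.trans (mul_le_mul_of_nonneg_left he3 hk0)
    calc 2 ^ (|s-3|/2) * ((∑' j, FC.wt (|s-3|/2) j * ‖u j‖) * FC.hsNorm (s-3) (FC.D1 η))
        ≤ 2 ^ (|s-3|/2) * ((Real.sqrt SP.κ * Nu) * Ne) := by
          apply mul_le_mul_of_nonneg_left _ h2b0
          exact mul_le_mul h1 hND3 (SP.hsNorm_nonneg _ _) (mul_nonneg hk0 hNu0)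
      _ = c3 * (Nu * Ne) := by rw [hc3def]; ring
  ----------------------------------------------------------------
  -- Part 2b : the series term of gCH2
  have hηmem : FC.memHs ((s-3)+2) η := by
    rw [show s-3+2 = s-1 by ring]; exact hη
  have hNη : FC.hsNorm ((s-3)+2) η = Ne := by rw [show s-3+2 = s-1 by ring]
  have hlie2' : ∀ k, FC.memHs (s-3) (FC.lie2 (ξ k) η) ∧
      FC.hsNorm (s-3) (FC.lie2 (ξ k) η) ≤
        (SP.KC (s-3) * SP.KC ((s-3)+1)) * FC.hsNorm (|s-3|+4) (ξ k) ^ 2 *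
          FC.hsNorm ((s-3)+2) η :=
    fun k => SP.lie2_bound (s-3) (ξ k) η (hYmem k) hηmem
  have hεs' : Summable (fun k =>
      (SP.KC (s-3) * SP.KC ((s-3)+1)) * FC.hsNorm (|s-3|+4) (ξ k) ^ 2 * Ne) :=
    (hY2s.mul_left _).mul_right _
  obtain ⟨hmT', hbT2⟩ := SP.tsumFC_bound (t := s-3)
    (F := fun k => FC.lie2 (ξ k) η)
    (ε := fun k => (SP.KC (s-3) * SP.KC ((s-3)+1)) * FC.hsNorm (|s-3|+4) (ξ k) ^ 2 * Ne)
    (fun k => (hlie2' k).1)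
    (fun k => by rw [← hNη]; exact (hlie2' k).2)
    (fun k => mul_nonneg (mul_nonneg (mul_nonneg (SP.KC_nonneg _) (SP.KC_nonneg _))
      (sq_nonneg _)) hNe0)
    hεs'
  have hbT2' : FC.hsNorm (s-3) (FC.tsumFC fun k => FC.lie2 (ξ k) η) ≤
      ((SP.KC (s-3) * SP.KC ((s-3)+1)) * SY) * Ne := by
    refine hbT2.trans (le_of_eq ?_)
    rw [show (fun k => (SP.KC (s-3) * SP.KC ((s-3)+1)) * FC.hsNorm (|s-3|+4) (ξ k) ^ 2 * Ne)
        = fun k => ((SP.KC (s-3) * SP.KC ((s-3)+1)) * Ne) * FC.hsNorm (|s-3|+4) (ξ k) ^ 2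
        from funext fun k => by ring, tsum_mul_left, hSYdef]
    ring
  obtain ⟨hmG2, hbG2⟩ := SP.memHs_add (SP.memHs_neg hmB) (SP.memHs_smul (1/2 : ℝ) hmT')
  have hbG2' : FC.hsNorm (s-3) (gCH2 ξ u η) ≤ c3 * (Nu * Ne) + c4 * Ne := by
    have e : gCH2 ξ u η = -(FC.mul u (FC.D1 η)) +
        (1/2 : ℝ) • FC.tsumFC fun k => FC.lie2 (ξ k) η := rfl
    rw [e]
    refine hbG2.trans ?_
    rw [SP.hsNorm_neg, SP.hsNorm_smul]
    have h1 : |(1/2 : ℝ)| = 1/2 := by norm_num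
    rw [h1]
    have h2 : (1/2 : ℝ) * FC.hsNorm (s-3) (FC.tsumFC fun k => FC.lie2 (ξ k) η) ≤ c4 * Ne := by
      rw [hc4def]
      calc (1/2 : ℝ) * FC.hsNorm (s-3) (FC.tsumFC fun k => FC.lie2 (ξ k) η) ≤
          (1/2 : ℝ) * (((SP.KC (s-3) * SP.KC ((s-3)+1)) * SY) * Ne) := by
            apply mul_le_mul_of_nonneg_left hbT2' (by norm_num)
        _ = 1/2 * ((SP.KC (s-3) * SP.KC (s-3+1)) * SY) * Ne := by ring
    linarith [hbB']
  ----------------------------------------------------------------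
  -- the g-estimate
  have hgoal1 : FC.pairNorm (s-2) (s-3) (gCH1 ξ u) (gCH2 ξ u η) ≤
      (c1 + c2 + c3 + c4 + c5 + c6 + 1) * (1 + P ^ 2) := by
    have hpn := SP.pairNorm_le (s-2) (s-3) (gCH1 ξ u) (gCH2 ξ u η)
    have hPP : P * P = P ^ 2 := (pow_two P).symm
    have hNu2 : Nu * Nu ≤ 1 + P ^ 2 := by
      have h := mul_le_mul hNuP hNuP hNu0 hP0
      rw [hPP] at h
      linarith
    have hNuNe : Nu * Ne ≤ 1 + P ^ 2 := by
      have h := mul_le_mul hNuP hNeP hNe0 hP0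
      rw [hPP] at h
      linarith
    have hP1 : P ≤ 1 + P ^ 2 := by
      have hexp : (P - 1) ^ 2 = P ^ 2 - 2 * P + 1 := by ring
      have h := sq_nonneg (P - 1)
      rw [hexp] at h
      linarith
    have hNu1 : Nu ≤ 1 + P ^ 2 := hNuP.trans hP1
    have hNe1 : Ne ≤ 1 + P ^ 2 := hNeP.trans hP1
    have t1 : c1 * (Nu * Nu) ≤ c1 * (1 + P ^ 2) := mul_le_mul_of_nonneg_left hNu2 hc10
    have t2 : c2 * Nu ≤ c2 * (1 + P ^ 2) := mul_le_mul_of_nonneg_left hNu1 hc20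
    have t3 : c3 * (Nu * Ne) ≤ c3 * (1 + P ^ 2) := mul_le_mul_of_nonneg_left hNuNe hc30
    have t4 : c4 * Ne ≤ c4 * (1 + P ^ 2) := mul_le_mul_of_nonneg_left hNe1 hc40
    have hq : (0:ℝ) ≤ 1 + P ^ 2 := by positivity
    have t5 : 0 ≤ c5 * (1 + P ^ 2) := mul_nonneg hc50 hq
    have t6 : 0 ≤ c6 * (1 + P ^ 2) := mul_nonneg hc60 hq
    have hCexp : (c1 + c2 + c3 + c4 + c5 + c6 + 1) * (1 + P ^ 2)
        = c1 * (1 + P ^ 2) + c2 * (1 + P ^ 2) + c3 * (1 + P ^ 2) + c4 * (1 + P ^ 2)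
          + c5 * (1 + P ^ 2) + c6 * (1 + P ^ 2) + (1 + P ^ 2) := by ring
    linarith [hbG1', hbG2', hpn]
  ----------------------------------------------------------------
  -- the h-estimate
  have hhelm_mem' : FC.memHs ((s-3)+1) (FC.helm u) := by
    apply SP.memHs_helm
    rw [show s-3+1+2 = s by ring]; exact hu
  have hNhelm' : FC.hsNorm ((s-3)+1) (FC.helm u) = Nu := by
    rw [SP.hsNorm_helm, show s-3+1+2 = s by ring]
  have hlie1 : ∀ k, FC.hsNorm (s-1) (hCH1 ξ k u) ≤
      SP.KC (s-3) * FC.hsNorm (|s-3|+3) (ξ k) * Nu := by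
    intro k
    have e : hCH1 ξ k u = -(FC.helmInv (FC.lie (ξ k) (FC.helm u))) := rfl
    rw [e, SP.hsNorm_neg, SP.hsNorm_helmInv, show s-1-2 = s-3 by ring]
    have := (SP.lie_bound (s-3) (ξ k) (FC.helm u) (hZmem k) hhelm_mem').2
    rwa [hNhelm'] at this
  have hηmem' : FC.memHs ((s-2)+1) η := by
    rw [show s-2+1 = s-1 by ring]; exact hη
  have hNη' : FC.hsNorm ((s-2)+1) η = Ne := by rw [show s-2+1 = s-1 by ring]
  have hlie1' : ∀ k, FC.hsNorm (s-2) (hCH2 ξ k η) ≤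
      SP.KC (s-2) * FC.hsNorm (|s-2|+3) (ξ k) * Ne := by
    intro k
    have e : hCH2 ξ k η = -(FC.lie (ξ k) η) := rfl
    rw [e, SP.hsNorm_neg]
    have := (SP.lie_bound (s-2) (ξ k) η (hWmem k) hηmem').2
    rwa [hNη'] at this
  set a : ℕ → ℝ := fun k => SP.KC (s-3) * FC.hsNorm (|s-3|+3) (ξ k) * Nu with hadef
  set b : ℕ → ℝ := fun k => SP.KC (s-2) * FC.hsNorm (|s-2|+3) (ξ k) * Ne with hbdef
  have ha0 : ∀ k, 0 ≤ a k := fun k =>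
    mul_nonneg (mul_nonneg (SP.KC_nonneg _) (hZ0 k)) hNu0
  have hb0 : ∀ k, 0 ≤ b k := fun k =>
    mul_nonneg (mul_nonneg (SP.KC_nonneg _) (hW0 k)) hNe0
  have has : Summable a := (hZs.mul_left _).mul_right _
  have hbs : Summable b := (hWs.mul_left _).mul_right _
  have habs : Summable (fun k => a k + b k) := has.add hbs
  have hab0 : ∀ k, 0 ≤ a k + b k := fun k => add_nonneg (ha0 k) (hb0 k)
  have hab2 : Summable (fun k => (a k + b k) ^ 2) := SP.sq_summable hab0 habs
  have hpair : ∀ k, FC.pairNorm (s-1) (s-2) (hCH1 ξ k u) (hCH2 ξ k η) ^ 2 ≤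
      (a k + b k) ^ 2 := by
    intro k
    rw [SP.pairNorm_sq]
    have h10 := SP.hsNorm_nonneg (s-1) (hCH1 ξ k u)
    have h20 := SP.hsNorm_nonneg (s-2) (hCH2 ξ k η)
    have h1 : FC.hsNorm (s-1) (hCH1 ξ k u) ≤ a k := hlie1 k
    have h2 : FC.hsNorm (s-2) (hCH2 ξ k η) ≤ b k := hlie1' k
    have e1 : FC.hsNorm (s-1) (hCH1 ξ k u) ^ 2 ≤ a k ^ 2 := pow_le_pow_left₀ h10 h1 2
    have e2 : FC.hsNorm (s-2) (hCH2 ξ k η) ^ 2 ≤ b k ^ 2 := pow_le_pow_left₀ h20 h2 2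
    have e3 : 0 ≤ a k * b k := mul_nonneg (ha0 k) (hb0 k)
    have e4 : (a k + b k) ^ 2 = a k ^ 2 + 2 * (a k * b k) + b k ^ 2 := by ring
    linarith
  have hpsum : Summable (fun k =>
      FC.pairNorm (s-1) (s-2) (hCH1 ξ k u) (hCH2 ξ k η) ^ 2) :=
    Summable.of_nonneg_of_le (fun k => sq_nonneg _) hpair hab2
  refine ⟨hgoal1, hpsum, ?_⟩
  have hstep : Real.sqrt (∑' k, FC.pairNorm (s-1) (s-2) (hCH1 ξ k u) (hCH2 ξ k η) ^ 2) ≤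
      ∑' k, (a k + b k) := by
    calc Real.sqrt (∑' k, FC.pairNorm (s-1) (s-2) (hCH1 ξ k u) (hCH2 ξ k η) ^ 2)
        ≤ Real.sqrt (∑' k, (a k + b k) ^ 2) :=
          Real.sqrt_le_sqrt (Summable.tsum_le_tsum hpair hpsum hab2)
      _ ≤ ∑' k, (a k + b k) := SP.sqrt_tsum_sq_le hab0 habs
  have hsum_ab : (∑' k, (a k + b k)) = c5 * Nu + c6 * Ne := by
    rw [Summable.tsum_add has hbs, hc5def, hc6def]
    have e1 : (∑' k, a k) = (SP.KC (s-3) * Nu) * SZ := by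
      rw [hadef, hSZdef]
      rw [show (fun k => SP.KC (s-3) * FC.hsNorm (|s-3|+3) (ξ k) * Nu)
          = fun k => (SP.KC (s-3) * Nu) * FC.hsNorm (|s-3|+3) (ξ k)
          from funext fun k => by ring, tsum_mul_left]
    have e2 : (∑' k, b k) = (SP.KC (s-2) * Ne) * SW := by
      rw [hbdef, hSWdef]
      rw [show (fun k => SP.KC (s-2) * FC.hsNorm (|s-2|+3) (ξ k) * Ne)
          = fun k => (SP.KC (s-2) * Ne) * FC.hsNorm (|s-2|+3) (ξ k)
          from funext fun k => by ring, tsum_mul_left]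
    rw [e1, e2]
    ring
  refine hstep.trans ?_
  rw [hsum_ab]
  have t5 : c5 * Nu ≤ c5 * P := mul_le_mul_of_nonneg_left hNuP hc50
  have t6 : c6 * Ne ≤ c6 * P := mul_le_mul_of_nonneg_left hNeP hc60
  have hCexp2 : (c1 + c2 + c3 + c4 + c5 + c6 + 1) * P
      = c1 * P + c2 * P + c3 * P + c4 * P + c5 * P + c6 * P + P := by ring
  linarith [mul_nonneg hc10 hP0, mul_nonneg hc20 hP0, mul_nonneg hc30 hP0,
    mul_nonneg hc40 hP0, hP0]
end
end

section
/- Let s > 7/2. There is a constant C = C(s) > 0 such that for all ξ ∈ H^s(𝕋) and all v ∈ H^{s-2}(𝕋): |(D^{s-2} 𝓛_ξ v, D^{s-2} v)_{L²}| ≤ C ‖ξ‖_{H^s} ‖v‖²_{H^{s-2}}. -/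
noncomputable section
open scoped BigOperators

namespace S8aux

lemma summable_inv_one_add_sq : Summable (fun l : ℤ => ((1:ℝ) + (l:ℝ) ^ 2)⁻¹) := by
  have h1 : Summable (fun n : ℕ => 1 / ((n:ℝ) + 1) ^ 2) := by
    have := (summable_nat_add_iff (f := fun n : ℕ => 1 / (n:ℝ) ^ 2) 1).mpr
      (Real.summable_one_div_nat_pow.mpr one_lt_two)
    refine this.congr fun n => ?_
    push_cast; ring_nf
  have hnat : Summable (fun n : ℕ => ((1:ℝ) + (n:ℝ) ^ 2)⁻¹) := by
    refine Summable.of_nonneg_of_le (fun n => by positivity) (fun n => ?_) (h1.mul_left 2)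
    rw [mul_one_div, inv_eq_one_div, div_le_div_iff₀ (by positivity) (by positivity)]
    nlinarith [sq_nonneg ((n:ℝ) - 1)]
  refine Summable.of_nat_of_neg hnat (hnat.congr fun n => ?_)
  push_cast; ring_nf

/-- Cauchy–Schwarz for tsums over an arbitrary index type. -/
lemma summable_mul_of_sq {ι : Type*} {a b : ι → ℝ} (ha : ∀ i, 0 ≤ a i) (hb : ∀ i, 0 ≤ b i)
    (h2a : Summable (fun i => a i ^ 2)) (h2b : Summable (fun i => b i ^ 2)) :
    Summable (fun i => a i * b i) := by
  refine Summable.of_nonneg_of_le (fun i => mul_nonneg (ha i) (hb i)) (fun i => ?_)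
    ((h2a.add h2b).mul_left (1/2))
  nlinarith [sq_nonneg (a i - b i)]

lemma tsum_mul_le_sqrt {ι : Type*} {a b : ι → ℝ} (ha : ∀ i, 0 ≤ a i) (hb : ∀ i, 0 ≤ b i)
    (h2a : Summable (fun i => a i ^ 2)) (h2b : Summable (fun i => b i ^ 2)) :
    ∑' i, a i * b i ≤ Real.sqrt (∑' i, a i ^ 2) * Real.sqrt (∑' i, b i ^ 2) := by
  refine Summable.tsum_le_of_sum_le (summable_mul_of_sq ha hb h2a h2b) (fun F => ?_)
  have hcs := Finset.sum_mul_sq_le_sq_mul_sq F a b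
  have h1 : ∑ i ∈ F, a i ^ 2 ≤ ∑' i, a i ^ 2 := Summable.sum_le_tsum F (fun i _ => sq_nonneg _) h2a
  have h2 : ∑ i ∈ F, b i ^ 2 ≤ ∑' i, b i ^ 2 := Summable.sum_le_tsum F (fun i _ => sq_nonneg _) h2b
  have hF : 0 ≤ ∑ i ∈ F, a i * b i :=
    Finset.sum_nonneg fun i _ => mul_nonneg (ha i) (hb i)
  have := Real.sqrt_le_sqrt (hcs.trans (mul_le_mul h1 h2 (Finset.sum_nonneg fun i _ => sq_nonneg _)
    ((Finset.sum_nonneg fun i _ => sq_nonneg _).trans h1)))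
  rwa [Real.sqrt_sq hF, Real.sqrt_mul ((Finset.sum_nonneg fun i _ => sq_nonneg _).trans h1 :
    (0:ℝ) ≤ _)] at this
  

lemma one_add_sq_pos (x : ℝ) : (0:ℝ) < 1 + x ^ 2 := by positivity

lemma rpow_wt_mono {t u : ℝ} (htu : t ≤ u) (x : ℝ) :
    (1 + x ^ 2) ^ t ≤ (1 + x ^ 2) ^ u :=
  Real.rpow_le_rpow_of_exponent_le (by nlinarith [sq_nonneg x]) htu

/-- key geometric inequality. -/
lemma geom_ineq {σ : ℝ} (hσ : 0 ≤ σ) (x y : ℝ) :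
    (1 + x ^ 2) ^ (σ/2) ≤
      2 ^ (σ/2) * (1 + y ^ 2) ^ (σ/2) * (1 + (x - y) ^ 2) ^ (σ/2) := by
  have hb : (1 + x ^ 2) ≤ 2 * (1 + y ^ 2) * (1 + (x - y) ^ 2) := by
    nlinarith [sq_nonneg (y - (x - y)), sq_nonneg (y * (x - y))]
  calc (1 + x ^ 2) ^ (σ/2) ≤ (2 * (1 + y ^ 2) * (1 + (x - y) ^ 2)) ^ (σ/2) :=
        Real.rpow_le_rpow (by positivity) hb (by positivity)
    _ = 2 ^ (σ/2) * (1 + y ^ 2) ^ (σ/2) * (1 + (x - y) ^ 2) ^ (σ/2) := by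
        rw [Real.mul_rpow (by positivity) (by positivity),
          Real.mul_rpow (by positivity) (by positivity)]

/-- Mean value inequality for rpow. -/
lemma rpow_sub_rpow_le {σ : ℝ} (hσ : 1 ≤ σ) {a b : ℝ} (hb : 1 ≤ b) (hba : b ≤ a) :
    a ^ σ - b ^ σ ≤ σ * a ^ (σ - 1) * (a - b) := by
  rcases eq_or_lt_of_le hba with h | h
  · rw [h, sub_self, sub_self, mul_zero]
    -- done
  · have hder : ∀ x : ℝ, HasDerivAt (fun t : ℝ => t ^ σ) (σ * x ^ (σ - 1)) x := by
      intro x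
      simpa [mul_comm] using Real.hasDerivAt_rpow_const (p := σ) (x := x) (Or.inr hσ)
    obtain ⟨c, hc, hceq⟩ := exists_hasDerivAt_eq_slope (fun t : ℝ => t ^ σ)
      (fun x => σ * x ^ (σ - 1)) h
      (Continuous.continuousOn (continuous_iff_continuousAt.mpr
        fun x => (hder x).continuousAt))
      (fun x _ => hder x)
    have hc1 : c ≤ a := hc.2.le
    have hc0 : (0:ℝ) ≤ c := le_trans (le_trans zero_le_one hb) hc.1.le
    have : a ^ σ - b ^ σ = σ * c ^ (σ - 1) * (a - b) := by
      have hab0 : a - b ≠ 0 := sub_ne_zero.mpr (ne_of_gt h)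
      rw [eq_div_iff hab0] at hceq
      linarith [hceq]
    rw [this]
    have hcc : c ^ (σ - 1) ≤ a ^ (σ - 1) :=
      Real.rpow_le_rpow hc0 hc1 (by linarith)
    have hσ0 : (0:ℝ) ≤ σ := by linarith
    nlinarith [hcc, sub_nonneg.mpr hba, mul_le_mul_of_nonneg_left hcc hσ0]

/-- difference bound for `W x = x (1+x²)^σ`, assuming `|y| ≤ |x|`. -/
lemma wdiff {σ : ℝ} (hσ : 1 ≤ σ) {x y : ℝ} (hyx : |y| ≤ |x|) :
    |x * (1 + x ^ 2) ^ σ - y * (1 + y ^ 2) ^ σ| ≤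
      (1 + 2 * σ) * |x - y| * (1 + x ^ 2) ^ σ := by
  have hy2x2 : y ^ 2 ≤ x ^ 2 := by
    have := sq_abs x ▸ sq_abs y ▸ pow_le_pow_left₀ (abs_nonneg y) hyx 2
    simpa using this
  have hA : (0:ℝ) < (1 + x ^ 2) ^ σ := Real.rpow_pos_of_pos (one_add_sq_pos x) σ
  have hAB : (1 + y ^ 2) ^ σ ≤ (1 + x ^ 2) ^ σ :=
    Real.rpow_le_rpow (by positivity) (by linarith) (by linarith)
  have hmvt : (1 + x ^ 2) ^ σ - (1 + y ^ 2) ^ σ ≤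
      σ * (1 + x ^ 2) ^ (σ - 1) * (x ^ 2 - y ^ 2) :=
    by
      have := rpow_sub_rpow_le hσ (a := 1 + x ^ 2) (b := 1 + y ^ 2)
        (by nlinarith [sq_nonneg y]) (by linarith)
      calc (1 + x ^ 2) ^ σ - (1 + y ^ 2) ^ σ
          ≤ σ * (1 + x ^ 2) ^ (σ - 1) * (1 + x ^ 2 - (1 + y ^ 2)) := this
        _ = σ * (1 + x ^ 2) ^ (σ - 1) * (x ^ 2 - y ^ 2) := by ring
  have key : |y| * ((1 + x ^ 2) ^ σ - (1 + y ^ 2) ^ σ) ≤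
      2 * σ * |x - y| * (1 + x ^ 2) ^ σ := by
    have h1 : |y| * ((1 + x ^ 2) ^ σ - (1 + y ^ 2) ^ σ) ≤
        σ * (1 + x ^ 2) ^ (σ - 1) * (|y| * (x ^ 2 - y ^ 2)) := by
      have := mul_le_mul_of_nonneg_left hmvt (abs_nonneg y)
      have hpos : (0:ℝ) ≤ σ * (1 + x ^ 2) ^ (σ - 1) := by positivity
      nlinarith [this]
    have h2 : |y| * (x ^ 2 - y ^ 2) ≤ 2 * (1 + x ^ 2) * |x - y| := by
      have hfac : x ^ 2 - y ^ 2 = (x - y) * (x + y) := by ring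
      have : |y| * (x ^ 2 - y ^ 2) ≤ |y| * (|x - y| * (|x| + |y|)) := by
        rw [hfac]
        refine mul_le_mul_of_nonneg_left ?_ (abs_nonneg y)
        calc (x - y) * (x + y) ≤ |(x - y) * (x + y)| := le_abs_self _
          _ = |x - y| * |x + y| := abs_mul _ _
          _ ≤ |x - y| * (|x| + |y|) :=
            mul_le_mul_of_nonneg_left (abs_add_le x y) (abs_nonneg _)
      refine this.trans ?_
      have hyx2 : |y| * (|x| + |y|) ≤ 2 * (1 + x ^ 2) := by
        nlinarith [abs_nonneg y, abs_nonneg x, sq_abs x, sq_abs y]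
      nlinarith [abs_nonneg (x - y), hyx2]
    have h3 : (1 + x ^ 2) ^ (σ - 1) * (1 + x ^ 2) = (1 + x ^ 2) ^ σ := by
      rw [← Real.rpow_add_one (ne_of_gt (one_add_sq_pos x))]
      ring_nf
    calc |y| * ((1 + x ^ 2) ^ σ - (1 + y ^ 2) ^ σ)
        ≤ σ * (1 + x ^ 2) ^ (σ - 1) * (|y| * (x ^ 2 - y ^ 2)) := h1
      _ ≤ σ * (1 + x ^ 2) ^ (σ - 1) * (2 * (1 + x ^ 2) * |x - y|) := by
          refine mul_le_mul_of_nonneg_left h2 (by positivity)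
      _ = 2 * σ * |x - y| * ((1 + x ^ 2) ^ (σ - 1) * (1 + x ^ 2)) := by ring
      _ = 2 * σ * |x - y| * (1 + x ^ 2) ^ σ := by rw [h3]
  calc |x * (1 + x ^ 2) ^ σ - y * (1 + y ^ 2) ^ σ|
      = |(x - y) * (1 + x ^ 2) ^ σ + y * ((1 + x ^ 2) ^ σ - (1 + y ^ 2) ^ σ)| := by
        ring_nf
    _ ≤ |(x - y) * (1 + x ^ 2) ^ σ| + |y * ((1 + x ^ 2) ^ σ - (1 + y ^ 2) ^ σ)| :=
        abs_add_le _ _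
    _ ≤ |x - y| * (1 + x ^ 2) ^ σ + 2 * σ * |x - y| * (1 + x ^ 2) ^ σ := by
        rw [abs_mul, abs_mul, abs_of_pos hA, abs_of_nonneg (sub_nonneg.mpr hAB)]
        exact add_le_add le_rfl key
    _ = (1 + 2 * σ) * |x - y| * (1 + x ^ 2) ^ σ := by ring


/-- smooth-ish cutoff -/
def θ (M x : ℝ) : ℝ := max 0 (min 1 (2 - |x| / M))

lemma θ_nonneg (M x : ℝ) : 0 ≤ θ M x := le_max_left _ _

lemma θ_le_one (M x : ℝ) : θ M x ≤ 1 := max_le zero_le_one (min_le_left _ _)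

lemma θ_eq_zero {M x : ℝ} (hM : 0 < M) (h : 2 * M ≤ |x|) : θ M x = 0 := by
  have : 2 - |x| / M ≤ 0 := by
    rw [sub_nonpos, le_div_iff₀ hM]; linarith
  have h2 : min 1 (2 - |x| / M) ≤ 0 := le_trans (min_le_right _ _) this
  exact max_eq_left h2

lemma θ_eq_one {M x : ℝ} (hM : 0 < M) (h : |x| ≤ M) : θ M x = 1 := by
  have h1 : (1:ℝ) ≤ 2 - |x| / M := by
    have : |x| / M ≤ 1 := (div_le_one hM).mpr h
    linarith
  rw [θ, min_eq_left h1, max_eq_right zero_le_one]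

lemma θ_lip {M : ℝ} (hM : 0 < M) (x y : ℝ) : |θ M x - θ M y| ≤ |x - y| / M := by
  have l1 : |θ M x - θ M y| ≤ |min 1 (2 - |x| / M) - min 1 (2 - |y| / M)| := by
    rw [θ, θ, max_comm 0 _, max_comm 0 _]
    exact abs_max_sub_max_le_abs _ _ _
  have l2 : |min 1 (2 - |x| / M) - min 1 (2 - |y| / M)| ≤
      |(2 - |x| / M) - (2 - |y| / M)| := by
    have := abs_min_sub_min_le_max (1:ℝ) (2 - |x| / M) 1 (2 - |y| / M)
    simpa using this
  have l3 : |(2 - |x| / M) - (2 - |y| / M)| = |(|y| - |x|)| / M := by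
    have e : (2 - |x| / M) - (2 - |y| / M) = (|y| - |x|) / M := by
      field_simp
      ring
    rw [e, abs_div, abs_of_pos hM]
  have l4 : |(|y| - |x|)| ≤ |x - y| := by
    rw [abs_sub_comm]
    exact abs_abs_sub_abs_le_abs_sub x y
  calc |θ M x - θ M y| ≤ |(2 - |x| / M) - (2 - |y| / M)| := l1.trans l2
    _ = |(|y| - |x|)| / M := l3
    _ ≤ |x - y| / M := by
      gcongr



lemma hsplit {σ : ℝ} (hσ0 : 0 ≤ σ) (z : ℝ) :
    (1 + z ^ 2) ^ σ = (1 + z ^ 2) ^ (σ/2) * (1 + z ^ 2) ^ (σ/2) := by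
  rw [← Real.rpow_add (by positivity)]; ring_nf

lemma abs_le_rpow_half (d : ℝ) : |d| ≤ (1 + d ^ 2) ^ ((1:ℝ)/2) := by
  rw [← Real.sqrt_eq_rpow]
  have : |d| = Real.sqrt (d ^ 2) := (Real.sqrt_sq_eq_abs d).symm
  rw [this]
  exact Real.sqrt_le_sqrt (by nlinarith)

lemma dlem {σ : ℝ} (hσ0 : 0 ≤ σ) (d : ℝ) :
    |d| * (1 + d ^ 2) ^ (σ/2) ≤ (1 + d ^ 2) ^ ((σ+1)/2) := by
  have h1 : |d| ≤ (1 + d ^ 2) ^ ((1:ℝ)/2) := by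
    rw [← Real.sqrt_eq_rpow]
    have : |d| = Real.sqrt (d ^ 2) := (Real.sqrt_sq_eq_abs d).symm
    rw [this]
    exact Real.sqrt_le_sqrt (by nlinarith)
  calc |d| * (1 + d ^ 2) ^ (σ/2) ≤ (1 + d ^ 2) ^ ((1:ℝ)/2) * (1 + d ^ 2) ^ (σ/2) :=
      mul_le_mul_of_nonneg_right h1 (by positivity)
    _ = (1 + d ^ 2) ^ ((σ+1)/2) := by
      rw [← Real.rpow_add (by positivity)]; ring_nf



variable {σ : ℝ}

/-- main pointwise commutator/cutoff estimate, asymmetric version -/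
lemma claimA_aux (hσ : 1 ≤ σ) {M : ℝ} (hM : 1 ≤ M) {x y : ℝ} (hyx : |y| ≤ |x|) :
    |θ M x * (x * (1 + x ^ 2) ^ σ) - θ M y * (y * (1 + y ^ 2) ^ σ)| ≤
      2 ^ (σ/2) * (2 * σ + 5) * (1 + (x - y) ^ 2) ^ ((σ+1)/2) *
        ((1 + x ^ 2) ^ (σ/2) * (1 + y ^ 2) ^ (σ/2)) := by
  have hσ0 : (0:ℝ) ≤ σ := le_trans zero_le_one hσ
  have hM0 : (0:ℝ) < M := lt_of_lt_of_le zero_lt_one hM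
  by_cases hcase : 2 * M ≤ |y|
  · rw [θ_eq_zero hM0 (hcase.trans hyx), θ_eq_zero hM0 hcase]
    simp only [zero_mul, sub_zero, abs_zero]
    positivity
  · push_neg at hcase
    set Wx := x * (1 + x ^ 2) ^ σ with hWx
    set Wy := y * (1 + y ^ 2) ^ σ with hWy
    have tri : |θ M x * Wx - θ M y * Wy| ≤
        θ M x * |Wx - Wy| + |θ M x - θ M y| * |Wy| := by
      have e : θ M x * Wx - θ M y * Wy = θ M x * (Wx - Wy) + (θ M x - θ M y) * Wy := by
        ring
      calc |θ M x * Wx - θ M y * Wy|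
          ≤ |θ M x * (Wx - Wy)| + |(θ M x - θ M y) * Wy| := by rw [e]; exact abs_add_le _ _
        _ = θ M x * |Wx - Wy| + |θ M x - θ M y| * |Wy| := by
            rw [abs_mul, abs_mul, abs_of_nonneg (θ_nonneg M x)]
    have geo : (1 + x ^ 2) ^ (σ/2) ≤
        2 ^ (σ/2) * (1 + y ^ 2) ^ (σ/2) * (1 + (x - y) ^ 2) ^ (σ/2) := geom_ineq hσ0 x y
    have geo' : (1 + y ^ 2) ^ (σ/2) ≤
        2 ^ (σ/2) * (1 + x ^ 2) ^ (σ/2) * (1 + (x - y) ^ 2) ^ (σ/2) := by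
      have := geom_ineq hσ0 y x
      have e : (y - x) ^ 2 = (x - y) ^ 2 := by ring
      rwa [e] at this
    have T1 : θ M x * |Wx - Wy| ≤
        (1 + 2 * σ) * 2 ^ (σ/2) * ((1 + (x - y) ^ 2) ^ ((σ+1)/2) *
          ((1 + x ^ 2) ^ (σ/2) * (1 + y ^ 2) ^ (σ/2))) := by
      have h1 : θ M x * |Wx - Wy| ≤ |Wx - Wy| :=
        (mul_le_of_le_one_left (abs_nonneg _) (θ_le_one M x))
      have h2 : |Wx - Wy| ≤ (1 + 2 * σ) * |x - y| * (1 + x ^ 2) ^ σ := wdiff hσ hyx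
      have h3 : (1 + 2 * σ) * |x - y| * (1 + x ^ 2) ^ σ ≤
          (1 + 2 * σ) * 2 ^ (σ/2) * ((1 + (x - y) ^ 2) ^ ((σ+1)/2) *
            ((1 + x ^ 2) ^ (σ/2) * (1 + y ^ 2) ^ (σ/2))) := by
        rw [hsplit hσ0 x]
        calc (1 + 2 * σ) * |x - y| * ((1 + x ^ 2) ^ (σ/2) * (1 + x ^ 2) ^ (σ/2))
            ≤ (1 + 2 * σ) * |x - y| * ((1 + x ^ 2) ^ (σ/2) *
              (2 ^ (σ/2) * (1 + y ^ 2) ^ (σ/2) * (1 + (x - y) ^ 2) ^ (σ/2))) := by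
              have hnn : (0:ℝ) ≤ (1 + 2 * σ) * |x - y| := by positivity
              refine mul_le_mul_of_nonneg_left ?_ hnn
              exact mul_le_mul_of_nonneg_left geo (by positivity)
          _ = (1 + 2 * σ) * 2 ^ (σ/2) * ((|x - y| * (1 + (x - y) ^ 2) ^ (σ/2)) *
              ((1 + x ^ 2) ^ (σ/2) * (1 + y ^ 2) ^ (σ/2))) := by ring
          _ ≤ (1 + 2 * σ) * 2 ^ (σ/2) * ((1 + (x - y) ^ 2) ^ ((σ+1)/2) *
              ((1 + x ^ 2) ^ (σ/2) * (1 + y ^ 2) ^ (σ/2))) := by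
              refine mul_le_mul_of_nonneg_left ?_ (by positivity)
              exact mul_le_mul_of_nonneg_right (dlem hσ0 (x - y)) (by positivity)
      exact (h1.trans h2).trans h3
    have T2 : |θ M x - θ M y| * |Wy| ≤
        2 * 2 ^ (σ/2) * ((1 + (x - y) ^ 2) ^ ((σ+1)/2) *
          ((1 + x ^ 2) ^ (σ/2) * (1 + y ^ 2) ^ (σ/2))) := by
      have h1 : |θ M x - θ M y| * |Wy| ≤ (|x - y| / M) * (|y| * (1 + y ^ 2) ^ σ) := by
        refine mul_le_mul (θ_lip hM0 x y) ?_ (abs_nonneg _) (by positivity)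
        rw [hWy, abs_mul, abs_of_pos (Real.rpow_pos_of_pos (one_add_sq_pos y) σ)]
      have h2 : (|x - y| / M) * (|y| * (1 + y ^ 2) ^ σ) ≤
          2 * (|x - y| * (1 + y ^ 2) ^ σ) := by
        have hyM : |y| / M ≤ 2 := by
          rw [div_le_iff₀ hM0]; linarith
        have e : (|x - y| / M) * (|y| * (1 + y ^ 2) ^ σ) =
            (|y| / M) * (|x - y| * (1 + y ^ 2) ^ σ) := by ring
        rw [e]
        exact mul_le_mul_of_nonneg_right hyM (by positivity)
      have h3 : 2 * (|x - y| * (1 + y ^ 2) ^ σ) ≤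
          2 * 2 ^ (σ/2) * ((1 + (x - y) ^ 2) ^ ((σ+1)/2) *
            ((1 + x ^ 2) ^ (σ/2) * (1 + y ^ 2) ^ (σ/2))) := by
        rw [hsplit hσ0 y]
        calc 2 * (|x - y| * ((1 + y ^ 2) ^ (σ/2) * (1 + y ^ 2) ^ (σ/2)))
            ≤ 2 * (|x - y| * ((1 + y ^ 2) ^ (σ/2) *
              (2 ^ (σ/2) * (1 + x ^ 2) ^ (σ/2) * (1 + (x - y) ^ 2) ^ (σ/2)))) := by
              refine mul_le_mul_of_nonneg_left ?_ (by norm_num)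
              refine mul_le_mul_of_nonneg_left ?_ (abs_nonneg _)
              exact mul_le_mul_of_nonneg_left geo' (by positivity)
          _ = 2 * 2 ^ (σ/2) * ((|x - y| * (1 + (x - y) ^ 2) ^ (σ/2)) *
              ((1 + x ^ 2) ^ (σ/2) * (1 + y ^ 2) ^ (σ/2))) := by ring
          _ ≤ 2 * 2 ^ (σ/2) * ((1 + (x - y) ^ 2) ^ ((σ+1)/2) *
              ((1 + x ^ 2) ^ (σ/2) * (1 + y ^ 2) ^ (σ/2))) := by
              refine mul_le_mul_of_nonneg_left ?_ (by positivity)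
              exact mul_le_mul_of_nonneg_right (dlem hσ0 (x - y)) (by positivity)
      exact (h1.trans h2).trans h3
    have final := add_le_add T1 T2
    have e2 : (1 + 2 * σ) * 2 ^ (σ/2) * ((1 + (x - y) ^ 2) ^ ((σ+1)/2) *
          ((1 + x ^ 2) ^ (σ/2) * (1 + y ^ 2) ^ (σ/2))) +
        2 * 2 ^ (σ/2) * ((1 + (x - y) ^ 2) ^ ((σ+1)/2) *
          ((1 + x ^ 2) ^ (σ/2) * (1 + y ^ 2) ^ (σ/2))) =
        2 ^ (σ/2) * (2 * σ + 3) * ((1 + (x - y) ^ 2) ^ ((σ+1)/2) *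
          ((1 + x ^ 2) ^ (σ/2) * (1 + y ^ 2) ^ (σ/2))) := by ring
    rw [e2] at final
    refine (tri.trans final).trans ?_
    have : (0:ℝ) ≤ (1 + (x - y) ^ 2) ^ ((σ+1)/2) *
        ((1 + x ^ 2) ^ (σ/2) * (1 + y ^ 2) ^ (σ/2)) := by positivity
    have h25 : 2 ^ (σ/2) * (2 * σ + 3) ≤ 2 ^ (σ/2) * (2 * σ + 5) := by
      have : (0:ℝ) < 2 ^ (σ/2) := by positivity
      nlinarith
    calc 2 ^ (σ/2) * (2 * σ + 3) * ((1 + (x - y) ^ 2) ^ ((σ+1)/2) *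
          ((1 + x ^ 2) ^ (σ/2) * (1 + y ^ 2) ^ (σ/2)))
        ≤ 2 ^ (σ/2) * (2 * σ + 5) * ((1 + (x - y) ^ 2) ^ ((σ+1)/2) *
          ((1 + x ^ 2) ^ (σ/2) * (1 + y ^ 2) ^ (σ/2))) :=
          mul_le_mul_of_nonneg_right h25 this
      _ = 2 ^ (σ/2) * (2 * σ + 5) * (1 + (x - y) ^ 2) ^ ((σ+1)/2) *
          ((1 + x ^ 2) ^ (σ/2) * (1 + y ^ 2) ^ (σ/2)) := by ring

/-- main pointwise commutator/cutoff estimate -/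
lemma claimA (hσ : 1 ≤ σ) {M : ℝ} (hM : 1 ≤ M) (x y : ℝ) :
    |θ M x * (x * (1 + x ^ 2) ^ σ) - θ M y * (y * (1 + y ^ 2) ^ σ)| ≤
      2 ^ (σ/2) * (2 * σ + 5) * (1 + (x - y) ^ 2) ^ ((σ+1)/2) *
        ((1 + x ^ 2) ^ (σ/2) * (1 + y ^ 2) ^ (σ/2)) := by
  rcases le_total |y| |x| with h | h
  · exact claimA_aux hσ hM h
  · have := claimA_aux hσ hM h
    have e1 : (y - x) ^ 2 = (x - y) ^ 2 := by ring
    rw [abs_sub_comm, e1] at this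
    calc |θ M x * (x * (1 + x ^ 2) ^ σ) - θ M y * (y * (1 + y ^ 2) ^ σ)|
        ≤ 2 ^ (σ/2) * (2 * σ + 5) * (1 + (x - y) ^ 2) ^ ((σ+1)/2) *
          ((1 + y ^ 2) ^ (σ/2) * (1 + x ^ 2) ^ (σ/2)) := this
      _ = 2 ^ (σ/2) * (2 * σ + 5) * (1 + (x - y) ^ 2) ^ ((σ+1)/2) *
          ((1 + x ^ 2) ^ (σ/2) * (1 + y ^ 2) ^ (σ/2)) := by ring

end S8aux


namespace S8main
open S8aux FC

def c0 : ℝ := ∑' l : ℤ, ((1:ℝ) + (l:ℝ) ^ 2)⁻¹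

lemma one_le_base (l : ℤ) : (1:ℝ) ≤ 1 + (l:ℝ) ^ 2 := by nlinarith [sq_nonneg ((l:ℝ))]

lemma wt_eq (t : ℝ) (k : ℤ) : wt t k = (1 + (k:ℝ) ^ 2) ^ t := rfl

lemma wt_pos (t : ℝ) (k : ℤ) : 0 < wt t k :=
  Real.rpow_pos_of_pos (by positivity) t

lemma one_le_wt {t : ℝ} (ht : 0 ≤ t) (k : ℤ) : 1 ≤ wt t k :=
  Real.one_le_rpow (one_le_base k) ht

lemma hsNorm_nonneg (t : ℝ) (c : FC) : 0 ≤ hsNorm t c := Real.sqrt_nonneg _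

lemma hsNorm_sq {t : ℝ} {c : FC} (h : memHs t c) :
    hsNorm t c ^ 2 = ∑' k : ℤ, wt t k * ‖c k‖ ^ 2 :=
  Real.sq_sqrt (tsum_nonneg fun k => mul_nonneg (wt_pos t k).le (sq_nonneg _))

lemma term_le_hsNorm_sq {t : ℝ} {c : FC} (h : memHs t c) (k : ℤ) :
    wt t k * ‖c k‖ ^ 2 ≤ hsNorm t c ^ 2 := by
  rw [hsNorm_sq h]
  exact Summable.le_tsum h k fun j _ => mul_nonneg (wt_pos t j).le (sq_nonneg _)

lemma coeff_le_hsNorm {t : ℝ} {c : FC} (h : memHs t c) (ht : 0 ≤ t) (k : ℤ) :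
    ‖c k‖ ≤ hsNorm t c := by
  have h1 : ‖c k‖ ^ 2 ≤ hsNorm t c ^ 2 := by
    have := term_le_hsNorm_sq h k
    nlinarith [one_le_wt ht k, sq_nonneg (‖c k‖), wt_pos t k]
  calc ‖c k‖ = Real.sqrt (‖c k‖ ^ 2) := (Real.sqrt_sq (norm_nonneg _)).symm
    _ ≤ Real.sqrt (hsNorm t c ^ 2) := Real.sqrt_le_sqrt h1
    _ = hsNorm t c := Real.sqrt_sq (hsNorm_nonneg t c)

lemma kcoeff_le_hsNorm {t : ℝ} {c : FC} (h : memHs t c) (ht : 1 ≤ t) (k : ℤ) :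
    (1 + (k:ℝ) ^ 2) ^ ((1:ℝ)/2) * ‖c k‖ ≤ hsNorm t c := by
  have hsq : ((1 + (k:ℝ) ^ 2) ^ ((1:ℝ)/2) * ‖c k‖) ^ 2 = (1 + (k:ℝ) ^ 2) * ‖c k‖ ^ 2 := by
    rw [mul_pow, ← Real.rpow_natCast ((1 + (k:ℝ) ^ 2) ^ ((1:ℝ)/2)) 2,
      ← Real.rpow_mul (by positivity)]
    norm_num
  have h2 : (1 + (k:ℝ) ^ 2) * ‖c k‖ ^ 2 ≤ wt t k * ‖c k‖ ^ 2 := by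
    refine mul_le_mul_of_nonneg_right ?_ (sq_nonneg _)
    have := rpow_wt_mono (x := (k:ℝ)) ht
    simpa [Real.rpow_one, wt_eq] using this
  have h1 : ((1 + (k:ℝ) ^ 2) ^ ((1:ℝ)/2) * ‖c k‖) ^ 2 ≤ hsNorm t c ^ 2 := by
    rw [hsq]; exact h2.trans (term_le_hsNorm_sq h k)
  have hnn : (0:ℝ) ≤ (1 + (k:ℝ) ^ 2) ^ ((1:ℝ)/2) * ‖c k‖ := by positivity
  calc (1 + (k:ℝ) ^ 2) ^ ((1:ℝ)/2) * ‖c k‖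
      = Real.sqrt (((1 + (k:ℝ) ^ 2) ^ ((1:ℝ)/2) * ‖c k‖) ^ 2) := (Real.sqrt_sq hnn).symm
    _ ≤ Real.sqrt (hsNorm t c ^ 2) := Real.sqrt_le_sqrt h1
    _ = hsNorm t c := Real.sqrt_sq (hsNorm_nonneg t c)

lemma weighted_summable {s : ℝ} {ξ : FC} (h : memHs s ξ) {t : ℝ} (ht : t ≤ s - 1) :
    Summable (fun l : ℤ => (1 + (l:ℝ) ^ 2) ^ (t/2) * ‖ξ l‖) := by
  have ha : ∀ l : ℤ, (0:ℝ) ≤ (1 + (l:ℝ) ^ 2) ^ ((t - s)/2) := fun l => by positivity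
  have hb : ∀ l : ℤ, (0:ℝ) ≤ (1 + (l:ℝ) ^ 2) ^ (s/2) * ‖ξ l‖ := fun l => by positivity
  have h2a : Summable (fun l : ℤ => ((1 + (l:ℝ) ^ 2) ^ ((t - s)/2)) ^ 2) := by
    refine Summable.of_nonneg_of_le (fun l => sq_nonneg _) (fun l => ?_) summable_inv_one_add_sq
    rw [← Real.rpow_natCast ((1 + (l:ℝ) ^ 2) ^ ((t - s)/2)) 2, ← Real.rpow_mul (by positivity)]
    have : (1 + (l:ℝ) ^ 2) ^ ((t - s)/2 * (2:ℕ)) ≤ (1 + (l:ℝ) ^ 2) ^ (-1 : ℝ) := by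
      refine Real.rpow_le_rpow_of_exponent_le (one_le_base l) ?_
      push_cast; linarith
    rwa [Real.rpow_neg_one] at this
  have h2b : Summable (fun l : ℤ => ((1 + (l:ℝ) ^ 2) ^ (s/2) * ‖ξ l‖) ^ 2) := by
    refine h.congr fun l => ?_
    rw [mul_pow, ← Real.rpow_natCast ((1 + (l:ℝ) ^ 2) ^ (s/2)) 2, ← Real.rpow_mul (by positivity)]
    norm_num [wt_eq]
  have := summable_mul_of_sq ha hb h2a h2b
  refine this.congr fun l => ?_
  rw [← mul_assoc, ← Real.rpow_add (by positivity)]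
  ring_nf

lemma weighted_tsum_le {s : ℝ} {ξ : FC} (h : memHs s ξ) {t : ℝ} (ht : t ≤ s - 1) :
    ∑' l : ℤ, (1 + (l:ℝ) ^ 2) ^ (t/2) * ‖ξ l‖ ≤ Real.sqrt c0 * hsNorm s ξ := by
  have ha : ∀ l : ℤ, (0:ℝ) ≤ (1 + (l:ℝ) ^ 2) ^ ((t - s)/2) := fun l => by positivity
  have hb : ∀ l : ℤ, (0:ℝ) ≤ (1 + (l:ℝ) ^ 2) ^ (s/2) * ‖ξ l‖ := fun l => by positivity
  have h2a : Summable (fun l : ℤ => ((1 + (l:ℝ) ^ 2) ^ ((t - s)/2)) ^ 2) := by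
    refine Summable.of_nonneg_of_le (fun l => sq_nonneg _) (fun l => ?_) summable_inv_one_add_sq
    rw [← Real.rpow_natCast ((1 + (l:ℝ) ^ 2) ^ ((t - s)/2)) 2, ← Real.rpow_mul (by positivity)]
    have : (1 + (l:ℝ) ^ 2) ^ ((t - s)/2 * (2:ℕ)) ≤ (1 + (l:ℝ) ^ 2) ^ (-1 : ℝ) := by
      refine Real.rpow_le_rpow_of_exponent_le (one_le_base l) ?_
      push_cast; linarith
    rwa [Real.rpow_neg_one] at this
  have h2b : Summable (fun l : ℤ => ((1 + (l:ℝ) ^ 2) ^ (s/2) * ‖ξ l‖) ^ 2) := by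
    refine h.congr fun l => ?_
    rw [mul_pow, ← Real.rpow_natCast ((1 + (l:ℝ) ^ 2) ^ (s/2)) 2, ← Real.rpow_mul (by positivity)]
    norm_num [wt_eq]
  have hcs := tsum_mul_le_sqrt ha hb h2a h2b
  have e : ∀ l : ℤ, (1 + (l:ℝ) ^ 2) ^ ((t - s)/2) * ((1 + (l:ℝ) ^ 2) ^ (s/2) * ‖ξ l‖) =
      (1 + (l:ℝ) ^ 2) ^ (t/2) * ‖ξ l‖ := by
    intro l
    rw [← mul_assoc, ← Real.rpow_add (by positivity)]
    ring_nf
  rw [tsum_congr e] at hcs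
  refine hcs.trans ?_
  refine mul_le_mul ?_ ?_ (Real.sqrt_nonneg _) (Real.sqrt_nonneg _)
  · refine Real.sqrt_le_sqrt ?_
    refine Summable.tsum_le_tsum (fun l => ?_) h2a summable_inv_one_add_sq
    rw [← Real.rpow_natCast ((1 + (l:ℝ) ^ 2) ^ ((t - s)/2)) 2, ← Real.rpow_mul (by positivity)]
    have : (1 + (l:ℝ) ^ 2) ^ ((t - s)/2 * (2:ℕ)) ≤ (1 + (l:ℝ) ^ 2) ^ (-1 : ℝ) := by
      refine Real.rpow_le_rpow_of_exponent_le (one_le_base l) ?_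
      push_cast; linarith
    rwa [Real.rpow_neg_one] at this
  · refine le_of_eq ?_
    rw [hsNorm]
    congr 1
    refine tsum_congr fun l => ?_
    rw [mul_pow, ← Real.rpow_natCast ((1 + (l:ℝ) ^ 2) ^ (s/2)) 2, ← Real.rpow_mul (by positivity)]
    norm_num [wt_eq]

/-- the shear equivalence `(l,m) ↦ (l+m, m)` on `ℤ²`. -/
def shear : ℤ × ℤ ≃ ℤ × ℤ where
  toFun p := (p.1 + p.2, p.2)
  invFun p := (p.1 - p.2, p.2)
  left_inv p := by simp
  right_inv p := by simp

lemma shift_sq_summable {h : ℤ → ℝ} (hh2 : Summable fun k => h k ^ 2) (l : ℤ) :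
    Summable (fun m : ℤ => h (l + m) ^ 2) := by
  have := hh2.comp_injective (add_right_injective l)
  exact this

lemma shift_sq_tsum {h : ℤ → ℝ} (l : ℤ) :
    ∑' m : ℤ, h (l + m) ^ 2 = ∑' k, h k ^ 2 := by
  have := (Equiv.addLeft l).tsum_eq (fun k : ℤ => h k ^ 2)
  simpa using this

lemma conv_row_le {F h : ℤ → ℝ} (hF : ∀ l, 0 ≤ F l) (hh : ∀ k, 0 ≤ h k)
    (hh2 : Summable fun k => h k ^ 2) (l : ℤ) :
    ∑' m : ℤ, F l * (h (l + m) * h m) ≤ F l * ∑' k, h k ^ 2 := by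
  rw [tsum_mul_left]
  refine mul_le_mul_of_nonneg_left ?_ (hF l)
  have hcs := tsum_mul_le_sqrt (fun m => hh (l + m)) hh (shift_sq_summable hh2 l) hh2
  rw [shift_sq_tsum l] at hcs
  refine hcs.trans (le_of_eq ?_)
  exact Real.mul_self_sqrt (tsum_nonneg fun k => sq_nonneg _)

lemma conv_row_summable {F h : ℤ → ℝ} (hh : ∀ k, 0 ≤ h k)
    (hh2 : Summable fun k => h k ^ 2) (l : ℤ) :
    Summable (fun m : ℤ => F l * (h (l + m) * h m)) :=
  Summable.mul_left _ (summable_mul_of_sq (fun m => hh _) (fun m => hh _)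
    (shift_sq_summable hh2 l) hh2)

lemma young_summable_aux {F h : ℤ → ℝ} (hF : ∀ l, 0 ≤ F l) (hh : ∀ k, 0 ≤ h k)
    (hFsum : Summable F) (hh2 : Summable fun k => h k ^ 2) :
    Summable (fun q : ℤ × ℤ => F q.1 * (h (q.1 + q.2) * h q.2)) := by
  refine (summable_prod_of_nonneg ?_).mpr ⟨?_, ?_⟩
  · intro p; exact mul_nonneg (hF _) (mul_nonneg (hh _) (hh _))
  · intro l; exact conv_row_summable hh hh2 l
  · refine Summable.of_nonneg_of_le (fun l => tsum_nonneg fun m => ?_) (fun l => ?_)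
      (hFsum.mul_right (∑' k, h k ^ 2))
    · exact mul_nonneg (hF _) (mul_nonneg (hh _) (hh _))
    · exact conv_row_le hF hh hh2 l

lemma young_summable {F h : ℤ → ℝ} (hF : ∀ l, 0 ≤ F l) (hh : ∀ k, 0 ≤ h k)
    (hFsum : Summable F) (hh2 : Summable fun k => h k ^ 2) :
    Summable (fun p : ℤ × ℤ => F (p.1 - p.2) * (h p.1 * h p.2)) := by
  refine (Equiv.summable_iff shear).mp ?_
  refine (young_summable_aux hF hh hFsum hh2).congr fun q => ?_
  simp [shear]

lemma young_tsum_le {F h : ℤ → ℝ} (hF : ∀ l, 0 ≤ F l) (hh : ∀ k, 0 ≤ h k)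
    (hFsum : Summable F) (hh2 : Summable fun k => h k ^ 2) :
    ∑' p : ℤ × ℤ, F (p.1 - p.2) * (h p.1 * h p.2) ≤ (∑' l, F l) * ∑' k, h k ^ 2 := by
  have hsum2 := young_summable_aux hF hh hFsum hh2
  have e1 : ∑' p : ℤ × ℤ, F (p.1 - p.2) * (h p.1 * h p.2) =
      ∑' q : ℤ × ℤ, F q.1 * (h (q.1 + q.2) * h q.2) := by
    rw [← shear.tsum_eq (fun p : ℤ × ℤ => F (p.1 - p.2) * (h p.1 * h p.2))]
    refine tsum_congr fun q => ?_
    simp [shear]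
  rw [e1, Summable.tsum_prod' hsum2 (fun l => conv_row_summable hh hh2 l)]
  have hrows_summable : Summable (fun l : ℤ => ∑' m, F l * (h (l + m) * h m)) :=
    ((summable_prod_of_nonneg
      (fun p => mul_nonneg (hF _) (mul_nonneg (hh _) (hh _)))).mp hsum2).2
  calc ∑' l, ∑' m, F l * (h (l + m) * h m) ≤ ∑' l, F l * ∑' k, h k ^ 2 :=
      Summable.tsum_le_tsum (conv_row_le hF hh hh2) hrows_summable (hFsum.mul_right _)
    _ = (∑' l, F l) * ∑' k, h k ^ 2 := tsum_mul_right

lemma G_vanish {N : ℕ} {k : ℤ} (hk : k ∉ Finset.Icc (-(2*(N:ℤ)+2)) (2*(N:ℤ)+2)) :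
    θ ((N:ℝ)+1) (k:ℝ) = 0 := by
  have hM0 : (0:ℝ) < (N:ℝ)+1 := by positivity
  refine θ_eq_zero hM0 ?_
  rw [Finset.mem_Icc, not_and_or, not_le, not_le] at hk
  have : (2*(N:ℤ)+2 : ℤ) ≤ |k| := by
    rcases hk with h | h
    · rw [abs_of_neg (by omega)]; omega
    · rw [abs_of_pos (by omega)]; omega
  have h2 : ((2*(N:ℤ)+2 : ℤ) : ℝ) ≤ ((|k| : ℤ) : ℝ) := Int.cast_le.mpr this
  rw [Int.cast_abs] at h2
  push_cast at h2 ⊢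
  linarith

set_option maxHeartbeats 1000000 in
lemma core_bound {σ : ℝ} (hσ : 1 ≤ σ) (N : ℕ) {φ : ℤ → ℤ → ℝ} {F0 h0 : ℤ → ℝ} {B : ℝ}
    (hF0 : ∀ l, 0 ≤ F0 l) (hh0 : ∀ k, 0 ≤ h0 k) (hB : ∀ k, h0 k ≤ B)
    (hSF0 : Summable F0)
    (hSF : Summable (fun l : ℤ => (1+(l:ℝ)^2)^((σ+1)/2) * F0 l))
    (hSh2 : Summable (fun k : ℤ => ((1+(k:ℝ)^2)^(σ/2) * h0 k)^2))
    (hanti : ∀ k m, φ m k = -φ k m)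
    (hφle : ∀ k m, |φ k m| ≤ F0 (k-m) * (h0 k * h0 m)) :
    |∑' k : ℤ, (θ ((N:ℝ)+1) (k:ℝ) * ((k:ℝ) * (1+(k:ℝ)^2)^σ)) * (∑' m, φ k m)| ≤
      2^(σ/2)*(2*σ+5) * ((∑' l : ℤ, (1+(l:ℝ)^2)^((σ+1)/2) * F0 l) *
        (∑' k : ℤ, ((1+(k:ℝ)^2)^(σ/2) * h0 k)^2)) / 2 := by
  have hσ0 : (0 : ℝ) ≤ σ := le_trans zero_le_one hσ
  set M : ℝ := (N:ℝ)+1 with hMdef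
  have hN0 : (0:ℝ) ≤ (N:ℝ) := Nat.cast_nonneg N
  have hM : (1:ℝ) ≤ M := by rw [hMdef]; linarith
  set Cσ : ℝ := 2^(σ/2)*(2*σ+5) with hCσdef
  have hCσ0 : (0:ℝ) ≤ Cσ := by
    have : (0:ℝ) < 2^(σ/2) := by positivity
    nlinarith
  set F : ℤ → ℝ := fun l => (1+(l:ℝ)^2)^((σ+1)/2) * F0 l with hFdef
  set h : ℤ → ℝ := fun k => (1+(k:ℝ)^2)^(σ/2) * h0 k with hhdef
  have hFnn : ∀ l, 0 ≤ F l := fun l => mul_nonneg (by positivity) (hF0 l)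
  have hhnn : ∀ k, 0 ≤ h k := fun k => mul_nonneg (by positivity) (hh0 k)
  set G : ℤ → ℝ := fun k => θ M (k:ℝ) * ((k:ℝ) * (1+(k:ℝ)^2)^σ) with hGdef
  -- pointwise commutator estimate
  have hGdiff : ∀ k m : ℤ, |G k - G m| ≤
      Cσ * (1 + ((k - m : ℤ) : ℝ) ^ 2) ^ ((σ+1)/2) *
        ((1+(k:ℝ)^2)^(σ/2) * (1+(m:ℝ)^2)^(σ/2)) := by
    intro k m
    have e : ((k - m : ℤ) : ℝ) = (k:ℝ) - (m:ℝ) := by push_cast; ring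
    rw [e, hGdef, hCσdef]
    exact claimA hσ hM (k:ℝ) (m:ℝ)
  have hmaj : ∀ p : ℤ × ℤ, |(G p.1 - G p.2) * φ p.1 p.2| ≤
      Cσ * (F (p.1 - p.2) * (h p.1 * h p.2)) := by
    intro p
    rw [abs_mul]
    calc |G p.1 - G p.2| * |φ p.1 p.2|
        ≤ (Cσ * (1 + ((p.1 - p.2 : ℤ) : ℝ) ^ 2) ^ ((σ+1)/2) *
            ((1+(p.1:ℝ)^2)^(σ/2) * (1+(p.2:ℝ)^2)^(σ/2))) *
          (F0 (p.1 - p.2) * (h0 p.1 * h0 p.2)) :=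
          mul_le_mul (hGdiff p.1 p.2) (hφle p.1 p.2) (abs_nonneg _) (by positivity)
      _ = Cσ * (F (p.1 - p.2) * (h p.1 * h p.2)) := by
          simp only [hFdef, hhdef]; ring
  have hSmaj : Summable (fun p : ℤ × ℤ => Cσ * (F (p.1 - p.2) * (h p.1 * h p.2))) :=
    (young_summable hFnn hhnn hSF hSh2).mul_left Cσ
  have hmajsum_le : ∑' p : ℤ × ℤ, Cσ * (F (p.1 - p.2) * (h p.1 * h p.2)) ≤
      Cσ * ((∑' l, F l) * (∑' k, h k ^ 2)) := by
    rw [tsum_mul_left]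
    exact mul_le_mul_of_nonneg_left (young_tsum_le hFnn hhnn hSF hSh2) hCσ0
  -- row summability
  have hSf0shift : ∀ k : ℤ, Summable (fun m => F0 (k - m)) := by
    intro k
    have := (Equiv.subLeft k).summable_iff (f := F0)
    refine (this.mpr hSF0).congr fun m => ?_
    simp [Function.comp]
  have hrowabs : ∀ k, Summable (fun m => |φ k m|) := by
    intro k
    refine Summable.of_nonneg_of_le (fun m => abs_nonneg _) (fun m => ?_)
      (((hSf0shift k).mul_left (h0 k * B)))
    refine (hφle k m).trans ?_
    have := mul_le_mul_of_nonneg_left (hB m) (hh0 k)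
    calc F0 (k-m) * (h0 k * h0 m) ≤ F0 (k-m) * (h0 k * B) :=
        mul_le_mul_of_nonneg_left this (hF0 _)
      _ = h0 k * B * F0 (k - m) := by ring
  have hrow : ∀ k, Summable (fun m => φ k m) := fun k => (hrowabs k).of_abs
  -- summability of the main double family
  have hSf1 : Summable (fun p : ℤ × ℤ => G p.1 * φ p.1 p.2) := by
    refine Summable.of_abs ?_
    refine (summable_prod_of_nonneg (fun p => abs_nonneg _)).mpr ⟨?_, ?_⟩
    · intro k
      refine ((hrowabs k).mul_left |G k|).congr fun m => ?_
      exact (abs_mul (G k) (φ k m)).symm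
    · refine summable_of_ne_finset_zero
        (s := Finset.Icc (-(2*(N:ℤ)+2)) (2*(N:ℤ)+2)) ?_
      intro k hk
      have hG0 : G k = 0 := by
        simp only [hGdef, hMdef]
        rw [G_vanish hk, zero_mul]
      simp [hG0]
  have hexp : ∑' k : ℤ, G k * (∑' m, φ k m) = ∑' p : ℤ × ℤ, G p.1 * φ p.1 p.2 := by
    have h2 : (∑' (k : ℤ) (m : ℤ), G k * φ k m) = ∑' p : ℤ × ℤ, G p.1 * φ p.1 p.2 :=
      (Summable.tsum_prod' hSf1 (fun k => (hrow k).mul_left (G k))).symm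
    rw [← h2]
    exact tsum_congr fun k =>
      (tsum_mul_left (a := G k) (f := fun m => φ k m)).symm
  -- swap summability
  have hSf2 : Summable (fun p : ℤ × ℤ => G p.2 * φ p.1 p.2) := by
    have hs := (Equiv.summable_iff (Equiv.prodComm ℤ ℤ)
      (f := fun p : ℤ × ℤ => G p.1 * φ p.1 p.2)).mpr hSf1
    refine hs.neg.congr fun p => ?_
    simp only [Function.comp_apply, Equiv.prodComm_apply, Prod.fst_swap, Prod.snd_swap]
    rw [hanti p.1 p.2]
    ring
  have htsum2 : ∑' p : ℤ × ℤ, G p.2 * φ p.1 p.2 =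
      - ∑' p : ℤ × ℤ, G p.1 * φ p.1 p.2 := by
    rw [← (Equiv.prodComm ℤ ℤ).tsum_eq (fun p : ℤ × ℤ => G p.1 * φ p.1 p.2),
      ← tsum_neg]
    refine tsum_congr fun p => ?_
    simp only [Equiv.prodComm_apply, Prod.fst_swap, Prod.snd_swap]
    rw [hanti p.1 p.2]
    ring
  have hkey : ∑' p : ℤ × ℤ, (G p.1 - G p.2) * φ p.1 p.2 =
      2 * ∑' p : ℤ × ℤ, G p.1 * φ p.1 p.2 := by
    have hsub := Summable.tsum_sub hSf1 hSf2
    have e : ∀ p : ℤ × ℤ, (G p.1 - G p.2) * φ p.1 p.2 =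
        G p.1 * φ p.1 p.2 - G p.2 * φ p.1 p.2 := fun p => by ring
    rw [tsum_congr e, hsub, htsum2]
    ring
  have hSdiffabs : Summable (fun p : ℤ × ℤ => ‖(G p.1 - G p.2) * φ p.1 p.2‖) := by
    refine Summable.of_nonneg_of_le (fun p => norm_nonneg _) (fun p => ?_) hSmaj
    rw [Real.norm_eq_abs]
    exact hmaj p
  have habs : |∑' p : ℤ × ℤ, (G p.1 - G p.2) * φ p.1 p.2| ≤
      Cσ * ((∑' l, F l) * (∑' k, h k ^ 2)) := by
    have h1 := norm_tsum_le_tsum_norm hSdiffabs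
    rw [Real.norm_eq_abs] at h1
    refine h1.trans ?_
    refine (Summable.tsum_le_tsum (fun p => ?_) (by exact hSdiffabs) hSmaj).trans hmajsum_le
    rw [Real.norm_eq_abs]
    exact hmaj p
  -- conclusion
  have hfin : |∑' k : ℤ, G k * (∑' m, φ k m)| ≤
      Cσ * ((∑' l, F l) * (∑' k, h k ^ 2)) / 2 := by
    rw [hexp]
    have : |∑' p : ℤ × ℤ, G p.1 * φ p.1 p.2| =
        |∑' p : ℤ × ℤ, (G p.1 - G p.2) * φ p.1 p.2| / 2 := by
      rw [hkey, abs_mul]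
      simp [abs_of_nonneg]
    rw [this]
    linarith [habs]
  exact hfin

end S8main

set_option maxHeartbeats 1600000 in
/-- Let `s > 7/2`.  There is `C = C(s) > 0` such that for all `ξ ∈ H^s(𝕋)`
and `v ∈ H^{s-2}(𝕋)`: `|(D^{s-2} 𝓛_ξ v, D^{s-2} v)_{L²}| ≤ C ‖ξ‖_{H^s} ‖v‖²_{H^{s-2}}`.
(Note `(D^{s-2}a, D^{s-2}b)_{L²}` is the `H^{s-2}` inner product.) -/
theorem statement8 (s : ℝ) (hs : 7 / 2 < s) :
    ∃ C > (0 : ℝ), ∀ ξ v : FC,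
      FC.memHs s ξ → FC.memHs (s - 2) v → FC.isReal ξ → FC.isReal v →
      |FC.hsInner (s - 2) (FC.lie ξ v) v| ≤ C * FC.hsNorm s ξ * FC.hsNorm (s - 2) v ^ 2 := by
  classical
  set σ : ℝ := s - 2 with hσdef
  have hσ1 : (1:ℝ) ≤ σ := by rw [hσdef]; linarith
  have hσ0 : (0:ℝ) ≤ σ := by linarith
  set Cσ : ℝ := 2^(σ/2)*(2*σ+5) with hCσdef
  have hCσ0 : (0:ℝ) ≤ Cσ := by
    have h2 : (0:ℝ) < 2^(σ/2) := by positivity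
    nlinarith
  have hB0 : (0:ℝ) ≤ Cσ * Real.sqrt S8main.c0 / 2 :=
    div_nonneg (mul_nonneg hCσ0 (Real.sqrt_nonneg _)) (by norm_num)
  refine ⟨Cσ * Real.sqrt S8main.c0 / 2 + 1, by linarith, ?_⟩
  intro ξ v hξ hv hξreal hvreal
  have hΞ0 : 0 ≤ FC.hsNorm s ξ := S8main.hsNorm_nonneg _ _
  have hNv0 : 0 ≤ FC.hsNorm σ v := S8main.hsNorm_nonneg _ _
  have hrhs0 : 0 ≤ (Cσ * Real.sqrt S8main.c0 / 2 + 1) * FC.hsNorm s ξ * FC.hsNorm σ v ^ 2 :=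
    mul_nonneg (mul_nonneg (by linarith) hΞ0) (sq_nonneg _)
  -- basic summability facts
  have hξ1 : Summable (fun l : ℤ => ‖ξ l‖) := by
    have := S8main.weighted_summable hξ (t := 0) (by linarith)
    refine this.congr fun l => ?_
    norm_num
  have hξhalf : Summable (fun l : ℤ => (1+(l:ℝ)^2)^((1:ℝ)/2) * ‖ξ l‖) := by
    have := S8main.weighted_summable hξ (t := 1) (by linarith)
    refine this.congr fun l => ?_
    norm_num
  have hSF : Summable (fun l : ℤ => (1+(l:ℝ)^2)^((σ+1)/2) * ‖ξ l‖) :=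
    S8main.weighted_summable hξ (t := σ+1) (by rw [hσdef]; linarith)
  have hFle : ∑' l : ℤ, (1+(l:ℝ)^2)^((σ+1)/2) * ‖ξ l‖ ≤
      Real.sqrt S8main.c0 * FC.hsNorm s ξ :=
    S8main.weighted_tsum_le hξ (t := σ+1) (by rw [hσdef]; linarith)
  have hwtsq : ∀ k : ℤ, FC.wt σ k * ‖v k‖ ^ 2 = ((1+(k:ℝ)^2)^(σ/2) * ‖v k‖)^2 := by
    intro k
    rw [mul_pow, ← Real.rpow_natCast ((1 + (k:ℝ) ^ 2) ^ (σ/2)) 2,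
      ← Real.rpow_mul (by positivity)]
    norm_num [S8main.wt_eq]
  have hSh2 : Summable (fun k : ℤ => ((1+(k:ℝ)^2)^(σ/2) * ‖v k‖)^2) :=
    hv.congr hwtsq
  have hh2sum : ∑' k : ℤ, ((1+(k:ℝ)^2)^(σ/2) * ‖v k‖)^2 = FC.hsNorm σ v ^ 2 := by
    rw [S8main.hsNorm_sq hv]
    exact tsum_congr fun k => (hwtsq k).symm
  have hvb : ∀ k, ‖v k‖ ≤ FC.hsNorm σ v := S8main.coeff_le_hsNorm hv hσ0
  have hkvb : ∀ k : ℤ, (1+(k:ℝ)^2)^((1:ℝ)/2) * ‖v k‖ ≤ FC.hsNorm σ v :=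
    S8main.kcoeff_le_hsNorm hv hσ1
  have hDvb : ∀ m : ℤ, ‖FC.D1 v m‖ ≤ FC.hsNorm σ v := by
    intro m
    have e : ‖FC.D1 v m‖ = |(m:ℝ)| * ‖v m‖ := by
      rw [FC.D1, norm_mul, norm_mul, Complex.norm_I, one_mul, Complex.norm_intCast]
    rw [e]
    calc |(m:ℝ)| * ‖v m‖ ≤ (1+(m:ℝ)^2)^((1:ℝ)/2) * ‖v m‖ :=
        mul_le_mul_of_nonneg_right (S8aux.abs_le_rpow_half (m:ℝ)) (norm_nonneg _)
      _ ≤ FC.hsNorm σ v := hkvb m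
  have hDξ1 : Summable (fun j : ℤ => ‖FC.D1 ξ j‖) := by
    refine Summable.of_nonneg_of_le (fun j => norm_nonneg _) (fun j => ?_) hξhalf
    have e : ‖FC.D1 ξ j‖ = |(j:ℝ)| * ‖ξ j‖ := by
      rw [FC.D1, norm_mul, norm_mul, Complex.norm_I, one_mul, Complex.norm_intCast]
    rw [e]
    exact mul_le_mul_of_nonneg_right (S8aux.abs_le_rpow_half (j:ℝ)) (norm_nonneg _)
  have hξshift : ∀ k : ℤ, Summable (fun m : ℤ => ‖ξ (k - m)‖) := by
    intro k
    have := (Equiv.subLeft k).summable_iff (f := fun l : ℤ => ‖ξ l‖)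
    refine (this.mpr hξ1).congr fun m => ?_
    simp [Function.comp]
  -- the lie derivative in convolution form
  have S1 : ∀ k : ℤ, Summable (fun j : ℤ => ξ j * FC.D1 v (k - j)) := by
    intro k
    refine Summable.of_norm ?_
    refine Summable.of_nonneg_of_le (fun j => norm_nonneg _) (fun j => ?_)
      (hξ1.mul_right (FC.hsNorm σ v))
    rw [norm_mul]
    exact mul_le_mul_of_nonneg_left (hDvb _) (norm_nonneg _)
  have S2 : ∀ k : ℤ, Summable (fun j : ℤ => FC.D1 ξ j * v (k - j)) := by
    intro k
    refine Summable.of_norm ?_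
    refine Summable.of_nonneg_of_le (fun j => norm_nonneg _) (fun j => ?_)
      (hDξ1.mul_right (FC.hsNorm σ v))
    rw [norm_mul]
    exact mul_le_mul_of_nonneg_left (hvb _) (norm_nonneg _)
  have hlie : ∀ k : ℤ, FC.lie ξ v k =
      Complex.I * (k:ℂ) * ∑' m : ℤ, ξ (k - m) * v m := by
    intro k
    have e1 : FC.lie ξ v k =
        (∑' j : ℤ, ξ j * FC.D1 v (k - j)) + ∑' j : ℤ, FC.D1 ξ j * v (k - j) := rfl
    rw [e1, ← Summable.tsum_add (S1 k) (S2 k)]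
    have e2 : ∀ j : ℤ, ξ j * FC.D1 v (k - j) + FC.D1 ξ j * v (k - j) =
        Complex.I * (k:ℂ) * (ξ j * v (k - j)) := by
      intro j
      simp only [FC.D1]
      push_cast
      ring
    rw [tsum_congr e2, tsum_mul_left]
    congr 1
    rw [← (Equiv.subLeft k).tsum_eq (fun j => ξ j * v (k - j))]
    refine tsum_congr fun m => ?_
    simp [sub_sub_cancel]
  -- the imaginary-part kernel
  set φ : ℤ → ℤ → ℝ := fun k m => (ξ (k - m) * v m * (starRingEnd ℂ) (v k)).im with hφdef
  set W : ℤ → ℝ := fun k => (k:ℝ) * FC.wt σ k with hWdef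
  set cc : ℤ → ℂ :=
    fun k => (FC.wt σ k : ℂ) * (FC.lie ξ v k * (starRingEnd ℂ) (v k)) with hccdef
  have hinner : FC.hsInner σ (FC.lie ξ v) v = (∑' k : ℤ, cc k).re := rfl
  have hφle : ∀ k m : ℤ, |φ k m| ≤ ‖ξ (k - m)‖ * (‖v k‖ * ‖v m‖) := by
    intro k m
    have h1 : |φ k m| ≤ ‖ξ (k - m) * v m * (starRingEnd ℂ) (v k)‖ := by
      simp only [hφdef]
      exact Complex.abs_im_le_norm _
    refine h1.trans (le_of_eq ?_)
    rw [norm_mul, norm_mul, starRingEnd_apply, norm_star]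
    ring
  have hanti : ∀ k m : ℤ, φ m k = -φ k m := by
    intro k m
    have hx : ξ (m - k) = (starRingEnd ℂ) (ξ (k - m)) := by
      have := hξreal (k - m)
      rwa [neg_sub] at this
    simp only [hφdef]
    rw [hx]
    have e : (starRingEnd ℂ) (ξ (k - m)) * v k * (starRingEnd ℂ) (v m) =
        (starRingEnd ℂ) (ξ (k - m) * v m * (starRingEnd ℂ) (v k)) := by
      rw [map_mul, map_mul, Complex.conj_conj]
      ring
    rw [e, Complex.conj_im]
  have hX : ∀ k : ℤ, Summable (fun m : ℤ => ξ (k - m) * v m * (starRingEnd ℂ) (v k)) := by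
    intro k
    refine Summable.of_norm ?_
    refine Summable.of_nonneg_of_le (fun m => norm_nonneg _) (fun m => ?_)
      ((hξshift k).mul_right (FC.hsNorm σ v * FC.hsNorm σ v))
    rw [norm_mul, norm_mul, starRingEnd_apply, norm_star]
    calc ‖ξ (k - m)‖ * ‖v m‖ * ‖v k‖
        = ‖ξ (k - m)‖ * (‖v m‖ * ‖v k‖) := by ring
      _ ≤ ‖ξ (k - m)‖ * (FC.hsNorm σ v * FC.hsNorm σ v) := by
          refine mul_le_mul_of_nonneg_left ?_ (norm_nonneg _)
          exact mul_le_mul (hvb m) (hvb k) (norm_nonneg _) hNv0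
  have hre : ∀ k : ℤ, (cc k).re = -(W k * ∑' m, φ k m) := by
    intro k
    have him : (∑' m : ℤ, ξ (k - m) * v m * (starRingEnd ℂ) (v k)).im = ∑' m, φ k m := by
      rw [Complex.im_tsum (hX k)]
    have e4 : (∑' m : ℤ, ξ (k - m) * v m) * (starRingEnd ℂ) (v k) =
        ∑' m : ℤ, ξ (k - m) * v m * (starRingEnd ℂ) (v k) := by
      exact (tsum_mul_right).symm
    have e5 : cc k = (FC.wt σ k : ℂ) * (Complex.I * (k:ℂ) *
        ∑' m : ℤ, ξ (k - m) * v m * (starRingEnd ℂ) (v k)) := by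
      simp only [hccdef]
      rw [hlie k, ← e4]
      ring
    rw [e5]
    have e6 : ∀ z : ℂ, ((FC.wt σ k : ℂ) * (Complex.I * (k:ℂ) * z)).re =
        -(FC.wt σ k * ((k:ℝ) * z.im)) := by
      intro z
      simp only [Complex.mul_re, Complex.mul_im, Complex.I_re, Complex.I_im,
        Complex.ofReal_re, Complex.ofReal_im, Complex.intCast_re, Complex.intCast_im]
      ring
    rw [e6, him, hWdef]
    ring_nf
  -- main case split
  by_cases hc : Summable cc
  · -- summable case
    have hcre : Summable (fun k : ℤ => (cc k).re) := (Complex.hasSum_re hc.hasSum).summable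
    have hWψ : Summable (fun k : ℤ => W k * ∑' m, φ k m) := by
      refine hcre.neg.congr fun k => ?_
      rw [hre k]; ring
    have hval : FC.hsInner σ (FC.lie ξ v) v = -∑' k : ℤ, (W k * ∑' m, φ k m) := by
      rw [hinner, Complex.re_tsum hc, tsum_congr hre, tsum_neg]
    rw [hval, abs_neg]
    -- uniform bound for the cutoff sums
    have hcore : ∀ N : ℕ,
        |∑' k : ℤ, (S8aux.θ ((N:ℝ)+1) (k:ℝ) * W k) * (∑' m, φ k m)| ≤
          Cσ * ((∑' l : ℤ, (1+(l:ℝ)^2)^((σ+1)/2) * ‖ξ l‖) *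
            (∑' k : ℤ, ((1+(k:ℝ)^2)^(σ/2) * ‖v k‖)^2)) / 2 := by
      intro N
      have := S8main.core_bound (σ := σ) hσ1 N (φ := φ)
        (F0 := fun l => ‖ξ l‖) (h0 := fun k => ‖v k‖) (B := FC.hsNorm σ v)
        (fun l => norm_nonneg _) (fun k => norm_nonneg _) hvb hξ1 hSF hSh2
        hanti (fun k m => (hφle k m).trans (le_of_eq (by ring)))
      exact this
    -- dominated convergence in N
    have htend : Filter.Tendsto
        (fun N : ℕ => ∑' k : ℤ, (S8aux.θ ((N:ℝ)+1) (k:ℝ) * W k) * (∑' m, φ k m))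
        Filter.atTop (nhds (∑' k : ℤ, W k * ∑' m, φ k m)) := by
      refine tendsto_tsum_of_dominated_convergence
        (bound := fun k : ℤ => |W k * ∑' m, φ k m|) hWψ.abs (fun k => ?_) ?_
      · -- pointwise convergence
        have hev : ∀ᶠ N : ℕ in Filter.atTop,
            (S8aux.θ ((N:ℝ)+1) (k:ℝ) * W k) * (∑' m, φ k m) = W k * ∑' m, φ k m := by
          refine Filter.eventually_atTop.mpr ⟨k.natAbs, fun N hN => ?_⟩
          have hkN : |(k:ℝ)| ≤ (N:ℝ)+1 := by
            have h1 : ((k.natAbs : ℕ) : ℝ) ≤ (N:ℝ) := Nat.cast_le.mpr hN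
            rw [Nat.cast_natAbs] at h1
            push_cast at h1
            linarith
          rw [S8aux.θ_eq_one (by positivity) hkN, one_mul]
        exact Filter.Tendsto.congr'
          (by filter_upwards [hev] with N h using h.symm) tendsto_const_nhds
      · refine Filter.Eventually.of_forall fun N => ?_
        intro k
        rw [Real.norm_eq_abs, abs_mul, abs_mul]
        have hθ1 : |S8aux.θ ((N:ℝ)+1) (k:ℝ)| ≤ 1 := by
          rw [abs_of_nonneg (S8aux.θ_nonneg _ _)]
          exact S8aux.θ_le_one _ _
        calc |S8aux.θ ((N:ℝ)+1) (k:ℝ)| * |W k| * |∑' m, φ k m|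
            ≤ 1 * |W k| * |∑' m, φ k m| := by
              refine mul_le_mul_of_nonneg_right ?_ (abs_nonneg _)
              exact mul_le_mul_of_nonneg_right hθ1 (abs_nonneg _)
          _ = |W k * ∑' m, φ k m| := by rw [one_mul, ← abs_mul]
    have hlim : |∑' k : ℤ, W k * ∑' m, φ k m| ≤
        Cσ * ((∑' l : ℤ, (1+(l:ℝ)^2)^((σ+1)/2) * ‖ξ l‖) *
          (∑' k : ℤ, ((1+(k:ℝ)^2)^(σ/2) * ‖v k‖)^2)) / 2 :=
      le_of_tendsto htend.abs (Filter.Eventually.of_forall hcore)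
    refine hlim.trans ?_
    have hFnn : 0 ≤ ∑' l : ℤ, (1+(l:ℝ)^2)^((σ+1)/2) * ‖ξ l‖ :=
      tsum_nonneg fun l => mul_nonneg (by positivity) (norm_nonneg _)
    have h1 : (∑' l : ℤ, (1+(l:ℝ)^2)^((σ+1)/2) * ‖ξ l‖) *
        (∑' k : ℤ, ((1+(k:ℝ)^2)^(σ/2) * ‖v k‖)^2) ≤
        (Real.sqrt S8main.c0 * FC.hsNorm s ξ) * FC.hsNorm σ v ^ 2 := by
      rw [hh2sum]
      exact mul_le_mul_of_nonneg_right hFle (sq_nonneg _)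
    have h2 : Cσ * ((∑' l : ℤ, (1+(l:ℝ)^2)^((σ+1)/2) * ‖ξ l‖) *
        (∑' k : ℤ, ((1+(k:ℝ)^2)^(σ/2) * ‖v k‖)^2)) / 2 ≤
        Cσ * ((Real.sqrt S8main.c0 * FC.hsNorm s ξ) * FC.hsNorm σ v ^ 2) / 2 := by
      gcongr
    refine h2.trans ?_
    have h3 : Cσ * ((Real.sqrt S8main.c0 * FC.hsNorm s ξ) * FC.hsNorm σ v ^ 2) / 2 =
        (Cσ * Real.sqrt S8main.c0 / 2) * FC.hsNorm s ξ * FC.hsNorm σ v ^ 2 := by ring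
    rw [h3]
    have h4 : (0:ℝ) ≤ FC.hsNorm s ξ * FC.hsNorm σ v ^ 2 :=
      mul_nonneg hΞ0 (sq_nonneg _)
    nlinarith
  · -- non-summable case : the inner product is zero by convention
    rw [hinner, tsum_eq_zero_of_not_summable hc]
    simpa using hrhs0
end
end
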